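/- arXiv:1201.4662 — 4 statements merged into one kernel-verified Lean document; each statement's English description precedes it below -/
import Mathlib

section
/- Let M be a connected simple matroid of rank 3 on a finite ground set E with |E| ≥ 5. Suppose x, y, z ∈ E are three distinct elements such that none of the pairs {x,y}, {y,z}, {z,x} is contained in any facet-defining flat of rank 2 of M. Then M is 2-decomposable by the hyperplane ({x,y,z},2)_=. -/
open Set Matroid

namespace PaperWMO

variable {α : Type*}

/-- The rank of a set `X` in a matroid `M`: the size of a largest independent subset of `X`. -/
noncomputable def rk (M : Matroid α) (X : Set α) : ℕ :=
  sSup {n : ℕ | ∃ I, M.Indep I ∧ I ⊆ X ∧ I.ncard = n}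

/-- Contraction of the set `C` in the matroid `M`, defined by duality:
`M / C = (M✶ \ C)✶`, where deletion is restriction to the complement. -/
noncomputable def contract (M : Matroid α) (C : Set α) : Matroid α :=
  (M✶ ↾ (M.E \ C))✶

/-- A matroid is connected if its ground set is nonempty and it is not the direct sum of
two matroids on nonempty disjoint ground sets. -/
def Conn (M : Matroid α) : Prop :=
  M.E.Nonempty ∧ ¬ ∃ (M₁ M₂ : Matroid α) (h : Disjoint M₁.E M₂.E),
    M₁.E.Nonempty ∧ M₂.E.Nonempty ∧ M = Matroid.disjointSum M₁ M₂ h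

/-- A flat of `M`: a subset `F` of the ground set such that any superset
`B` with `F ⊆ B ⊆ M.E` of the same rank equals `F`. -/
def IsFlat (M : Matroid α) (F : Set α) : Prop :=
  F ⊆ M.E ∧ ∀ B : Set α, F ⊆ B → B ⊆ M.E → rk M B = rk M F → B = F

/-- A matroid is simple if every subset of the ground set with at most two elements
is independent. -/
def IsSimple (M : Matroid α) : Prop :=
  ∀ X ⊆ M.E, X.ncard ≤ 2 → M.Indep X

/-- A facet-defining flat of rank 2: a flat `F` of rank 2 such that
both the restriction `M ↾ F` and the contraction `M / F` are connected. -/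
def FacetFlat2 (M : Matroid α) (F : Set α) : Prop :=
  IsFlat M F ∧ rk M F = 2 ∧ Conn (M ↾ F) ∧ Conn (contract M F)

/-- `M` is 2-decomposable by the hyperplane `(A, a)_=`. -/
def TwoDecomposableBy (M : Matroid α) (A : Set α) (a : ℕ) : Prop :=
  (∃ N₁ : Matroid α, N₁.E = M.E ∧
      ∀ B : Set α, N₁.IsBase B ↔ M.IsBase B ∧ (B ∩ A).ncard ≤ a) ∧
  (∃ N₂ : Matroid α, N₂.E = M.E ∧
      ∀ B : Set α, N₂.IsBase B ↔ M.IsBase B ∧ a ≤ (B ∩ A).ncard) ∧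
  (∃ B : Set α, M.IsBase B ∧ a < (B ∩ A).ncard) ∧
  (∃ B : Set α, M.IsBase B ∧ (B ∩ A).ncard < a)

/-- A 3-partition in `M`: a partition of the ground set into three parts, each of size
at least two, such that no facet-defining flat of rank 2 meets all three parts, and the
union of any two parts has rank 3. -/
def ThreePartition (M : Matroid α) (A₁ A₂ A₃ : Set α) : Prop :=
  A₁ ∪ A₂ ∪ A₃ = M.E ∧
  Disjoint A₁ A₂ ∧ Disjoint A₂ A₃ ∧ Disjoint A₁ A₃ ∧
  2 ≤ A₁.ncard ∧ 2 ≤ A₂.ncard ∧ 2 ≤ A₃.ncard ∧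
  (¬ ∃ F : Set α, FacetFlat2 M F ∧
      (F ∩ A₁).Nonempty ∧ (F ∩ A₂).Nonempty ∧ (F ∩ A₃).Nonempty) ∧
  rk M (A₁ ∪ A₂) = 3 ∧ rk M (A₂ ∪ A₃) = 3 ∧ rk M (A₃ ∪ A₁) = 3

/-- The adjacency relation of the graph `g(A, B)` (with respect to the matroid `M`):
the vertex set is `B`, and distinct `x, y ∈ B` are adjacent iff some facet-defining flat
of rank 2 of `M` contains both `x` and `y` and meets `A`. -/
def gAdj (M : Matroid α) (A B : Set α) (x y : α) : Prop :=
  x ∈ B ∧ y ∈ B ∧ x ≠ y ∧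
    ∃ F : Set α, FacetFlat2 M F ∧ x ∈ F ∧ y ∈ F ∧ (F ∩ A).Nonempty

/-- `C` is the vertex set of a connected component of the graph `g(S, V)`. -/
def IsGComponent (M : Matroid α) (S V C : Set α) : Prop :=
  ∃ x ∈ V, C = {y | y ∈ V ∧ Relation.ReflTransGen (gAdj M S V) x y}

section AuxLemmas

variable {M : Matroid α} {X I J B F : Set α}

lemma rk_bddAbove (hfin : M.E.Finite) (X : Set α) :
    BddAbove {n : ℕ | ∃ I, M.Indep I ∧ I ⊆ X ∧ I.ncard = n} := by
  refine ⟨M.E.ncard, fun n ⟨I, hI, _, hc⟩ => ?_⟩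
  exact hc ▸ Set.ncard_le_ncard hI.subset_ground hfin

lemma le_rk (hfin : M.E.Finite) (hJ : M.Indep J) (hJX : J ⊆ X) : J.ncard ≤ rk M X :=
  le_csSup (rk_bddAbove hfin X) ⟨J, hJ, hJX, rfl⟩

lemma rk_le {n : ℕ} (h : ∀ J, M.Indep J → J ⊆ X → J.ncard ≤ n) : rk M X ≤ n :=
  csSup_le ⟨0, ∅, M.empty_indep, empty_subset X, ncard_empty α⟩
    (fun _ ⟨J, hJ, hJX, hc⟩ => hc ▸ h J hJ hJX)

lemma rk_eq_ncard_of_basis (hfin : M.E.Finite) (hIX : M.IsBasis I X) : rk M X = I.ncard := by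
  refine le_antisymm (rk_le fun J hJ hJX => ?_) (le_rk hfin hIX.indep hIX.subset)
  obtain ⟨J', hJ', hJJ'⟩ := hJ.subset_isBasis_of_subset hJX hIX.subset_ground
  calc J.ncard ≤ J'.ncard := Set.ncard_le_ncard hJJ' (hfin.subset hJ'.indep.subset_ground)
    _ = I.ncard := (hJ'.isBase_restrict).ncard_eq_ncard_of_isBase hIX.isBase_restrict

lemma base_ncard (hfin : M.E.Finite) (hrank : rk M M.E = 3) (hB : M.IsBase B) : B.ncard = 3 := by
  rw [← hrank, rk_eq_ncard_of_basis hfin hB.isBasis_ground]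

lemma base_of_indep_ncard (hfin : M.E.Finite) (hrank : rk M M.E = 3)
    (hI : M.Indep I) (h3 : I.ncard = 3) : M.IsBase I := by
  obtain ⟨B, hB, hIB⟩ := hI.exists_isBase_superset
  have hfB : B.Finite := hfin.subset hB.subset_ground
  have : I = B := Set.eq_of_subset_of_ncard_le hIB (by rw [base_ncard hfin hrank hB, h3]) hfB
  rwa [this]

lemma pair_indep (hsimple : ∀ X ⊆ M.E, X.ncard ≤ 2 → M.Indep X) {a b : α}
    (ha : a ∈ M.E) (hb : b ∈ M.E) : M.Indep {a, b} := by
  refine hsimple _ (by simp [insert_subset_iff, ha, hb]) ?_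
  calc ({a, b} : Set α).ncard ≤ ({b} : Set α).ncard + 1 := Set.ncard_insert_le a {b}
    _ = 2 := by simp

lemma rk_closure_pair (hfin : M.E.Finite) {a b : α} (hab : a ≠ b) (hI : M.Indep {a, b}) :
    rk M (M.closure {a, b}) = 2 := by
  rw [rk_eq_ncard_of_basis hfin hI.isBasis_closure, Set.ncard_pair hab]

/-- Any closure is a flat in the custom sense. -/
lemma isFlat_closure (hfin : M.E.Finite) (X : Set α) : IsFlat M (M.closure X) := by
  refine ⟨M.closure_subset_ground X, fun B hFB hBE hrk => ?_⟩
  obtain ⟨I, hI⟩ := M.exists_isBasis (M.closure X) (M.closure_subset_ground X)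
  obtain ⟨J, hJ, hIJ⟩ := hI.indep.subset_isBasis_of_subset (hI.subset.trans hFB) hBE
  rw [rk_eq_ncard_of_basis hfin hJ, rk_eq_ncard_of_basis hfin hI] at hrk
  have hIJ' : I = J :=
    Set.eq_of_subset_of_ncard_le hIJ (le_of_eq hrk) (hfin.subset hJ.indep.subset_ground)
  refine subset_antisymm ?_ hFB
  have h1 : B ⊆ M.closure J := hJ.subset_closure
  rw [← hIJ'] at h1
  rwa [hI.closure_eq_closure, closure_closure] at h1

/-- The restriction of a simple matroid to a rank-2 set with ≥ 3 elements is connected. -/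
lemma conn_restrict (hfin : M.E.Finite) (hsimple : ∀ X ⊆ M.E, X.ncard ≤ 2 → M.Indep X)
    (hFE : F ⊆ M.E) (hrk2 : rk M F = 2) {a b w : α} (ha : a ∈ F) (hb : b ∈ F) (hw : w ∈ F)
    (hab : a ≠ b) (haw : a ≠ w) (hbw : b ≠ w) : Conn (M ↾ F) := by
  constructor
  · exact ⟨a, ha⟩
  rintro ⟨M₁, M₂, hdisj, hne₁, hne₂, heq⟩
  have hFeq : F = M₁.E ∪ M₂.E := by
    have := congrArg Matroid.E heq
    simpa using this
  -- a key step: a 3-element independent set inside F is impossible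
  have hno3 : ∀ p q s : α, p ∈ F → q ∈ F → s ∈ F → p ≠ q → p ≠ s → q ≠ s →
      ¬ (M ↾ F).Indep (insert s {p, q}) := by
    intro p q s hp hq hs hpq hps hqs hind
    rw [restrict_indep_iff] at hind
    have h3 : (insert s {p, q} : Set α).ncard = 3 := by
      rw [Set.ncard_insert_of_notMem (by
          simp only [mem_insert_iff, mem_singleton_iff]
          push_neg
          exact ⟨Ne.symm hps, Ne.symm hqs⟩)
        (Set.Finite.subset (hfin.subset hFE) (by rw [insert_subset_iff, singleton_subset_iff]; exact ⟨hp, hq⟩)), Set.ncard_pair hpq]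
    have := le_rk hfin hind.1 hind.2
    rw [hrk2, h3] at this
    omega
  -- find two elements in the same part and one in the other
  have hmem : ∀ t, t ∈ F → t ∈ M₁.E ∨ t ∈ M₂.E := by
    intro t ht; rw [hFeq] at ht; exact ht
  have hpair : ∀ p q s : α, p ∈ M₁.E → q ∈ M₁.E → s ∈ M₂.E → p ≠ q → False := by
    intro p q s hp hq hs hpq
    have hpF : p ∈ F := hFeq ▸ Or.inl hp
    have hqF : q ∈ F := hFeq ▸ Or.inl hq
    have hsF : s ∈ F := hFeq ▸ Or.inr hs
    have hps : p ≠ s := fun h => (disjoint_left.mp hdisj hp) (h ▸ hs)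
    have hqs : q ≠ s := fun h => (disjoint_left.mp hdisj hq) (h ▸ hs)
    refine hno3 p q s hpF hqF hsF hpq hps hqs ?_
    have hIpq : (M ↾ F).Indep {p, q} := by
      rw [restrict_indep_iff]
      exact ⟨pair_indep hsimple (hFE hpF) (hFE hqF), by
        rw [insert_subset_iff, singleton_subset_iff]; exact ⟨hpF, hqF⟩⟩
    have hIs : (M ↾ F).Indep {s} := by
      rw [restrict_indep_iff]
      refine ⟨hsimple _ (singleton_subset_iff.mpr (hFE hsF)) (by rw [Set.ncard_singleton]; omega),
        singleton_subset_iff.mpr hsF⟩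
    rw [heq, disjointSum_indep_iff] at hIpq hIs ⊢
    have e1 : ({p, q} : Set α) ∩ M₁.E = {p, q} := inter_eq_left.mpr (by rw [insert_subset_iff, singleton_subset_iff]; exact ⟨hp, hq⟩)
    have e2 : ({s} : Set α) ∩ M₂.E = {s} := inter_eq_left.mpr (singleton_subset_iff.mpr hs)
    have e3 : (insert s {p, q} : Set α) ∩ M₁.E = {p, q} := by
      ext t
      simp only [mem_inter_iff, mem_insert_iff, mem_singleton_iff]
      constructor
      · rintro ⟨rfl | ht, htE⟩
        · exact absurd htE (disjoint_right.mp hdisj hs)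
        · exact ht
      · rintro (rfl | rfl)
        · exact ⟨Or.inr (Or.inl rfl), hp⟩
        · exact ⟨Or.inr (Or.inr rfl), hq⟩
    have e4 : (insert s {p, q} : Set α) ∩ M₂.E = {s} := by
      ext t
      simp only [mem_inter_iff, mem_insert_iff, mem_singleton_iff]
      constructor
      · rintro ⟨rfl | ht, htE⟩
        · rfl
        · rcases ht with rfl | rfl
          · exact absurd htE (disjoint_left.mp hdisj hp)
          · exact absurd htE (disjoint_left.mp hdisj hq)
      · rintro rfl
        exact ⟨Or.inl rfl, hs⟩
    refine ⟨by rw [e3]; rw [e1] at hIpq; exact hIpq.1, by rw [e4]; rw [e2] at hIs; exact hIs.2.1, ?_⟩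
    intro t ht
    rcases ht with rfl | rfl | rfl
    · exact Or.inr hs
    · exact Or.inl hp
    · exact Or.inl hq
  have hpair' : ∀ p q s : α, p ∈ M₂.E → q ∈ M₂.E → s ∈ M₁.E → p ≠ q → False := by
    intro p q s hp hq hs hpq
    have hpF : p ∈ F := hFeq ▸ Or.inr hp
    have hqF : q ∈ F := hFeq ▸ Or.inr hq
    have hsF : s ∈ F := hFeq ▸ Or.inl hs
    have hps : p ≠ s := fun h => (disjoint_right.mp hdisj hp) (h ▸ hs)
    have hqs : q ≠ s := fun h => (disjoint_right.mp hdisj hq) (h ▸ hs)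
    refine hno3 p q s hpF hqF hsF hpq hps hqs ?_
    have hIpq : (M ↾ F).Indep {p, q} := by
      rw [restrict_indep_iff]
      exact ⟨pair_indep hsimple (hFE hpF) (hFE hqF), by
        rw [insert_subset_iff, singleton_subset_iff]; exact ⟨hpF, hqF⟩⟩
    have hIs : (M ↾ F).Indep {s} := by
      rw [restrict_indep_iff]
      refine ⟨hsimple _ (singleton_subset_iff.mpr (hFE hsF)) (by rw [Set.ncard_singleton]; omega),
        singleton_subset_iff.mpr hsF⟩
    rw [heq, disjointSum_indep_iff] at hIpq hIs ⊢
    have e1 : ({p, q} : Set α) ∩ M₂.E = {p, q} := inter_eq_left.mpr (by rw [insert_subset_iff, singleton_subset_iff]; exact ⟨hp, hq⟩)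
    have e2 : ({s} : Set α) ∩ M₁.E = {s} := inter_eq_left.mpr (singleton_subset_iff.mpr hs)
    have e3 : (insert s {p, q} : Set α) ∩ M₂.E = {p, q} := by
      ext t
      simp only [mem_inter_iff, mem_insert_iff, mem_singleton_iff]
      constructor
      · rintro ⟨rfl | ht, htE⟩
        · exact absurd htE (disjoint_left.mp hdisj hs)
        · exact ht
      · rintro (rfl | rfl)
        · exact ⟨Or.inr (Or.inl rfl), hp⟩
        · exact ⟨Or.inr (Or.inr rfl), hq⟩
    have e4 : (insert s {p, q} : Set α) ∩ M₁.E = {s} := by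
      ext t
      simp only [mem_inter_iff, mem_insert_iff, mem_singleton_iff]
      constructor
      · rintro ⟨rfl | ht, htE⟩
        · rfl
        · rcases ht with rfl | rfl
          · exact absurd htE (disjoint_right.mp hdisj hp)
          · exact absurd htE (disjoint_right.mp hdisj hq)
      · rintro rfl
        exact ⟨Or.inl rfl, hs⟩
    refine ⟨by rw [e4]; rw [e2] at hIs; exact hIs.1, by rw [e3]; rw [e1] at hIpq; exact hIpq.2.1, ?_⟩
    intro t ht
    rcases ht with rfl | rfl | rfl
    · exact Or.inl hs
    · exact Or.inr hp
    · exact Or.inr hq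
  obtain ⟨s₁, hs₁⟩ := hne₁
  obtain ⟨s₂, hs₂⟩ := hne₂
  rcases hmem a ha with haE | haE <;> rcases hmem b hb with hbE | hbE
  · exact hpair a b s₂ haE hbE hs₂ hab
  · rcases hmem w hw with hwE | hwE
    · exact hpair a w b haE hwE hbE haw
    · exact hpair' b w a hbE hwE haE hbw
  · rcases hmem w hw with hwE | hwE
    · exact hpair b w a hbE hwE haE hbw
    · exact hpair' a w b haE hwE hbE haw
  · exact hpair' a b s₁ haE hbE hs₁ hab

lemma conn_contract (hfin : M.E.Finite) (hrank : rk M M.E = 3) (hFE : F ⊆ M.E)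
    (hrk2 : rk M F = 2) (hex : ∀ e ∈ M.E \ F, ∃ B, M.IsBase B ∧ B ⊆ F ∪ {e}) :
    Conn (contract M F) := by
  set D := M.E \ F with hD
  have hC : contract M F = (M✶ ↾ D)✶ := rfl
  have hgr : (M✶ ↾ D).E = D := by simp
  have hCground : (contract M F).E = D := by rw [hC]; simp
  have hDne : D.Nonempty := by
    rw [nonempty_iff_ne_empty]
    intro h
    have h1 : M.E ⊆ F := by rwa [← diff_eq_empty]
    have h2 : F = M.E := subset_antisymm hFE h1
    rw [h2, hrank] at hrk2
    omega
  have hnoBF : ∀ B, M.IsBase B → ¬ (B ⊆ F) := by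
    intro B hB hBF
    have := le_rk hfin hB.indep hBF
    rw [hrk2, base_ncard hfin hrank hB] at this
    omega
  have hcoind : ∀ e ∈ D, M✶.Indep (D \ {e}) := by
    intro e he
    rw [dual_indep_iff_exists (diff_subset.trans diff_subset)]
    obtain ⟨B, hB, hBsub⟩ := hex e he
    refine ⟨B, hB, ?_⟩
    rw [disjoint_left]
    rintro t ⟨⟨htE, htF⟩, hte⟩ htB
    rcases hBsub htB with h | h
    · exact htF h
    · exact hte h
  have hDnotco : ¬ M✶.Indep D := by
    intro h
    rw [dual_indep_iff_exists diff_subset] at h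
    obtain ⟨B, hB, hdisj⟩ := h
    refine hnoBF B hB fun t ht => ?_
    have htE : t ∈ M.E := hB.subset_ground ht
    by_contra htF
    exact (disjoint_right.mp hdisj ht) ⟨htE, htF⟩
  have hbase1 : ∀ e ∈ D, (M✶ ↾ D).IsBase (D \ {e}) := by
    intro e he
    rw [isBase_restrict_iff']
    constructor
    · exact ⟨hcoind e he, diff_subset⟩
    · rintro J ⟨hJind, hJD⟩ hsub
      have heJ : e ∉ J := by
        intro heJ
        have hDJ : D ⊆ J := by
          intro t ht
          by_cases hte : t = e
          · exact hte ▸ heJ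
          · exact hsub ⟨ht, hte⟩
        have : J = D := subset_antisymm hJD hDJ
        exact hDnotco (this ▸ hJind)
      exact subset_diff_singleton hJD heJ
  have hbase2 : ∀ X, (M✶ ↾ D).IsBase X → ∃ e ∈ D, X = D \ {e} := by
    intro X hX
    rw [isBase_restrict_iff'] at hX
    obtain ⟨⟨hXind, hXD⟩, hmax⟩ := hX
    have hXne : X ≠ D := fun h => hDnotco (h ▸ hXind)
    obtain ⟨e, heD, heX⟩ := exists_of_ssubset (HasSubset.Subset.ssubset_of_ne hXD hXne)
    have h1 : X ⊆ D \ {e} := subset_diff_singleton hXD heX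
    have h2 : D \ {e} ⊆ X := hmax ⟨hcoind e heD, diff_subset⟩ h1
    exact ⟨e, heD, subset_antisymm h1 h2⟩
  have hCbase : ∀ B, (contract M F).IsBase B ↔ ∃ e ∈ D, B = {e} := by
    intro B
    constructor
    · intro hB
      have hBD : B ⊆ D := by
        have := hB.subset_ground
        rwa [hCground] at this
      rw [hC, dual_isBase_iff (by rwa [hgr]), hgr] at hB
      obtain ⟨e, heD, hDB⟩ := hbase2 _ hB
      refine ⟨e, heD, ?_⟩
      have hcan : D \ (D \ B) = B := diff_diff_cancel_left hBD
      rw [hDB, diff_diff_cancel_left (singleton_subset_iff.mpr heD)] at hcan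
      exact hcan.symm
    · rintro ⟨e, heD, rfl⟩
      rw [hC, dual_isBase_iff (by rw [hgr]; exact singleton_subset_iff.mpr heD), hgr]
      exact hbase1 e heD
  constructor
  · rw [hCground]; exact hDne
  rintro ⟨M₁, M₂, hdisj, ⟨e₁, he₁⟩, ⟨e₂, he₂⟩, heq⟩
  have hDeq : D = M₁.E ∪ M₂.E := by
    have := congrArg Matroid.E heq
    rwa [hCground, disjointSum_ground_eq] at this
  have hne12 : e₁ ≠ e₂ := fun h => (disjoint_left.mp hdisj he₁) (h ▸ he₂)
  have hsing : ∀ e, e ∈ D → (contract M F).Indep {e} := by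
    intro e he
    exact ((hCbase {e}).mpr ⟨e, he, rfl⟩).indep
  have hI1 : M₁.Indep {e₁} := by
    have := hsing e₁ (hDeq ▸ Or.inl he₁)
    rw [heq, disjointSum_indep_iff] at this
    have h1 : ({e₁} : Set α) ∩ M₁.E = {e₁} := inter_eq_left.mpr (singleton_subset_iff.mpr he₁)
    rw [h1] at this
    exact this.1
  have hI2 : M₂.Indep {e₂} := by
    have := hsing e₂ (hDeq ▸ Or.inr he₂)
    rw [heq, disjointSum_indep_iff] at this
    have h1 : ({e₂} : Set α) ∩ M₂.E = {e₂} := inter_eq_left.mpr (singleton_subset_iff.mpr he₂)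
    rw [h1] at this
    exact this.2.1
  have hpair : (contract M F).Indep {e₁, e₂} := by
    rw [heq, disjointSum_indep_iff]
    have h1 : ({e₁, e₂} : Set α) ∩ M₁.E = {e₁} := by
      ext t
      simp only [mem_inter_iff, mem_insert_iff, mem_singleton_iff]
      constructor
      · rintro ⟨rfl | rfl, htE⟩
        · rfl
        · exact absurd htE (disjoint_right.mp hdisj he₂)
      · rintro rfl
        exact ⟨Or.inl rfl, he₁⟩
    have h2 : ({e₁, e₂} : Set α) ∩ M₂.E = {e₂} := by
      ext t
      simp only [mem_inter_iff, mem_insert_iff, mem_singleton_iff]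
      constructor
      · rintro ⟨rfl | rfl, htE⟩
        · exact absurd htE (disjoint_left.mp hdisj he₁)
        · rfl
      · rintro rfl
        exact ⟨Or.inr rfl, he₂⟩
    rw [h1, h2]
    refine ⟨hI1, hI2, ?_⟩
    rintro t (rfl | rfl)
    · exact Or.inl he₁
    · exact Or.inr he₂
  obtain ⟨B, hB, hsubB⟩ := hpair.exists_isBase_superset
  obtain ⟨e, _, rfl⟩ := (hCbase B).mp hB
  have h1 : e₁ = e := hsubB (Or.inl rfl)
  have h2 : e₂ = e := hsubB (Or.inr rfl)
  exact hne12 (h1.trans h2.symm)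

lemma facetFlat_closure_pair (hfin : M.E.Finite)
    (hsimple : ∀ X ⊆ M.E, X.ncard ≤ 2 → M.Indep X) (hrank : rk M M.E = 3) {a b w : α}
    (hab : a ≠ b) (ha : a ∈ M.E) (hb : b ∈ M.E) (hw : w ∈ M.E)
    (hwab : w ∉ ({a, b} : Set α)) (hwcl : w ∈ M.closure {a, b}) :
    FacetFlat2 M (M.closure {a, b}) := by
  have hI : M.Indep {a, b} := pair_indep hsimple ha hb
  have hFE : M.closure {a, b} ⊆ M.E := M.closure_subset_ground _
  have habF : ({a, b} : Set α) ⊆ M.closure {a, b} := M.subset_closure _ hI.subset_ground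
  have hrk2 := rk_closure_pair hfin hab hI
  refine ⟨isFlat_closure hfin _, hrk2, ?_, ?_⟩
  · refine conn_restrict hfin hsimple hFE hrk2 (habF (Or.inl rfl)) (habF (Or.inr rfl)) hwcl
      hab (fun h => hwab (h ▸ Or.inl rfl)) (fun h => hwab (h ▸ Or.inr rfl))
  · refine conn_contract hfin hrank hFE hrk2 ?_
    intro e he
    have heab : e ∉ ({a, b} : Set α) := fun h => he.2 (habF h)
    have hind : M.Indep (insert e {a, b}) := by
      rw [hI.insert_indep_iff]
      exact Or.inl ⟨he.1, he.2⟩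
    refine ⟨insert e {a, b}, base_of_indep_ncard hfin hrank hind ?_, ?_⟩
    · rw [Set.ncard_insert_of_notMem heab (hfin.subset hI.subset_ground), Set.ncard_pair hab]
    · rintro t (rfl | htab)
      · exact Or.inr rfl
      · exact Or.inl (habF htab)

lemma pair_extension_indep (hfin : M.E.Finite)
    (hsimple : ∀ X ⊆ M.E, X.ncard ≤ 2 → M.Indep X) (hrank : rk M M.E = 3) {a b : α}
    (hab : a ≠ b) (ha : a ∈ M.E) (hb : b ∈ M.E)
    (hgood : ∀ F, FacetFlat2 M F → ¬ (({a, b} : Set α) ⊆ F)) :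
    ∀ w ∈ M.E, w ∉ ({a, b} : Set α) → M.Indep (insert w {a, b}) := by
  intro w hw hwab
  by_contra hnind
  have hI : M.Indep {a, b} := pair_indep hsimple ha hb
  have hwcl : w ∈ M.closure {a, b} := by
    rw [hI.insert_indep_iff] at hnind
    push_neg at hnind
    rcases hnind with ⟨h1, _⟩
    by_contra hcl
    exact h1 ⟨hw, hcl⟩
  exact hgood _ (facetFlat_closure_pair hfin hsimple hrank hab ha hb hw hwab hwcl)
    (M.subset_closure _ hI.subset_ground)

end AuxLemmas

/-- If `|E| ≥ 5` and `x, y, z` are three distinct elements no pair of which is contained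
in a facet-defining flat of rank 2, then `M` is 2-decomposable by `({x,y,z},2)_=`. -/
theorem twoDecomposable_of_triangle (M : Matroid α) (hfin : M.E.Finite)
    (hconn : Conn M) (hsimple : IsSimple M) (hrank : rk M M.E = 3)
    (hcard : 5 ≤ M.E.ncard)
    (x y z : α) (hx : x ∈ M.E) (hy : y ∈ M.E) (hz : z ∈ M.E)
    (hxy : x ≠ y) (hyz : y ≠ z) (hzx : z ≠ x)
    (hpairs : ∀ F : Set α, FacetFlat2 M F →
      ¬ ({x, y} : Set α) ⊆ F ∧ ¬ ({y, z} : Set α) ⊆ F ∧ ¬ ({z, x} : Set α) ⊆ F) :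
    TwoDecomposableBy M {x, y, z} 2 := by
  clear hconn
  have hAE : ({x, y, z} : Set α) ⊆ M.E := by
    rintro t (rfl | rfl | rfl)
    exacts [hx, hy, hz]
  have hfinA : ({x, y, z} : Set α).Finite := toFinite _
  have hA3 : ({x, y, z} : Set α).ncard = 3 := by
    rw [Set.ncard_insert_of_notMem (by simp [hxy, Ne.symm hzx]), Set.ncard_pair hyz]
  -- every pair from {x,y,z} plus any other element is a base
  have key : ∀ a b w : α, a ∈ ({x, y, z} : Set α) → b ∈ ({x, y, z} : Set α) → a ≠ b →
      w ∈ M.E → w ∉ ({a, b} : Set α) → M.IsBase (insert w {a, b}) := by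
    have mk : ∀ a b : α, a ≠ b → a ∈ M.E → b ∈ M.E →
        (∀ F, FacetFlat2 M F → ¬ (({a, b} : Set α) ⊆ F)) →
        ∀ w, w ∈ M.E → w ∉ ({a, b} : Set α) → M.IsBase (insert w {a, b}) := by
      intro a b hab ha hb hgood w hw hwab
      refine base_of_indep_ncard hfin hrank
        (pair_extension_indep hfin hsimple hrank hab ha hb hgood w hw hwab) ?_
      rw [Set.ncard_insert_of_notMem hwab, Set.ncard_pair hab]
    rintro a b w (rfl | rfl | rfl) (rfl | rfl | rfl) hab hw hwab
    · exact absurd rfl hab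
    · exact mk a b hab hx hy (fun F hF => (hpairs F hF).1) w hw hwab
    · exact mk a b hab hx hz
        (fun F hF => by rw [Set.pair_comm]; exact (hpairs F hF).2.2) w hw hwab
    · exact mk a b hab hy hx
        (fun F hF => by rw [Set.pair_comm]; exact (hpairs F hF).1) w hw hwab
    · exact absurd rfl hab
    · exact mk a b hab hy hz (fun F hF => (hpairs F hF).2.1) w hw hwab
    · exact mk a b hab hz hx (fun F hF => (hpairs F hF).2.2) w hw hwab
    · exact mk a b hab hz hy
        (fun F hF => by rw [Set.pair_comm]; exact (hpairs F hF).2.1) w hw hwab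
    · exact absurd rfl hab
  have baseA : M.IsBase ({x, y, z} : Set α) := by
    have hxyz : x ∉ ({y, z} : Set α) := by simp [hxy, Ne.symm hzx]
    exact key y z x (Or.inr (Or.inl rfl)) (Or.inr (Or.inr rfl)) hyz hx hxyz
  -- a base mostly outside {x,y,z}
  have hdiff2 : 2 ≤ (M.E \ {x, y, z}).ncard := by
    rw [Set.ncard_diff hAE hfinA, hA3]
    omega
  obtain ⟨u, hu, v, hv, huv⟩ :=
    (Set.one_lt_ncard (s := M.E \ {x, y, z}) (hfin.subset diff_subset)).mp (by omega)
  have huvind : M.Indep {u, v} := pair_indep hsimple hu.1 hv.1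
  obtain ⟨B₀, hB₀, hB₀sub⟩ := huvind.exists_isBase_superset
  have hB₀fin : B₀.Finite := hfin.subset hB₀.subset_ground
  have hB₀A : (B₀ ∩ {x, y, z}).ncard ≤ 1 := by
    have hsub : B₀ ∩ {x, y, z} ⊆ B₀ \ {u, v} := by
      rintro t ⟨htB, htA⟩
      refine ⟨htB, ?_⟩
      rintro (rfl | rfl)
      · exact hu.2 htA
      · exact hv.2 htA
    have h1 : (B₀ \ {u, v}).ncard = 1 := by
      rw [Set.ncard_diff hB₀sub (toFinite _), base_ncard hfin hrank hB₀, Set.ncard_pair huv]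
    calc (B₀ ∩ {x, y, z}).ncard ≤ (B₀ \ {u, v}).ncard :=
          Set.ncard_le_ncard hsub (hB₀fin.subset diff_subset)
      _ = 1 := h1
  have hB₀ne : B₀ ≠ ({x, y, z} : Set α) := by
    intro h
    exact hu.2 (h ▸ hB₀sub (Or.inl rfl))
  -- for a base, "≠ {x,y,z}" is the same as "≤ 2 elements in {x,y,z}"
  have hBiff₁ : ∀ B, M.IsBase B → (B ≠ ({x, y, z} : Set α) ↔ (B ∩ {x, y, z}).ncard ≤ 2) := by
    intro B hB
    constructor
    · intro hne
      by_contra h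
      push_neg at h
      have h3 : ({x, y, z} : Set α).ncard ≤ (B ∩ {x, y, z}).ncard := by omega
      have h4 := Set.eq_of_subset_of_ncard_le inter_subset_right h3 hfinA
      have hAB : ({x, y, z} : Set α) ⊆ B := by
        rw [← h4]; exact inter_subset_left
      have h5 : ({x, y, z} : Set α) = B := Set.eq_of_subset_of_ncard_le hAB
        (by rw [base_ncard hfin hrank hB, hA3]) (hfin.subset hB.subset_ground)
      exact hne h5.symm
    · intro h hEq
      rw [hEq, inter_self, hA3] at h
      omega
  -- exchange property for N₁
  have exch₁ : Matroid.ExchangeProperty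
      (fun B => M.IsBase B ∧ B ≠ ({x, y, z} : Set α)) := by
    rintro B₁ B₂ ⟨hB₁, hne₁⟩ ⟨hB₂, hne₂⟩ e he
    obtain ⟨f, hf, hBase'⟩ := M.isBase_exchange B₁ B₂ hB₁ hB₂ e he
    by_cases hA' : insert f (B₁ \ {e}) = ({x, y, z} : Set α)
    · have hfB₁ : B₁.Finite := hfin.subset hB₁.subset_ground
      have hsubA : B₁ \ {e} ⊆ ({x, y, z} : Set α) := by
        rw [← hA']; exact subset_insert f _
      have hcard2 : (B₁ \ {e}).ncard = 2 := by
        rw [Set.ncard_diff_singleton_of_mem he.1, base_ncard hfin hrank hB₁]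
      obtain ⟨p, q, hpq, hpair⟩ := Set.ncard_eq_two.mp hcard2
      have hpB : p ∈ B₁ \ {e} := by rw [hpair]; exact Or.inl rfl
      have hqB : q ∈ B₁ \ {e} := by rw [hpair]; exact Or.inr rfl
      have hAfp : ({x, y, z} : Set α) = insert f {p, q} := by rw [← hA', hpair]
      have hf' : ∃ f', f' ∈ B₂ \ B₁ ∧ f' ≠ f := by
        by_contra h
        push_neg at h
        have hB₂sub : B₂ ⊆ insert f {p, q} := by
          intro t ht
          by_cases htB₁ : t ∈ B₁
          · have hte : t ∉ ({e} : Set α) := fun hh => he.2 (by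
              rw [mem_singleton_iff] at hh
              rwa [← hh])
            have htd : t ∈ B₁ \ {e} := ⟨htB₁, hte⟩
            rw [hpair] at htd
            exact Or.inr htd
          · exact Or.inl (h t ⟨ht, htB₁⟩)
        have hB₂eq : B₂ = insert f {p, q} := by
          refine Set.eq_of_subset_of_ncard_le hB₂sub ?_ (toFinite _)
          calc (insert f {p, q} : Set α).ncard ≤ ({p, q} : Set α).ncard + 1 :=
                Set.ncard_insert_le f {p, q}
            _ = 3 := by rw [Set.ncard_pair hpq]
            _ = B₂.ncard := (base_ncard hfin hrank hB₂).symm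
        exact hne₂ (by rw [hB₂eq, ← hAfp])
      obtain ⟨f', hf'B, hf'f⟩ := hf'
      have hf'pq : f' ∉ ({p, q} : Set α) := fun hh =>
        hf'B.2 (diff_subset (show f' ∈ B₁ \ {e} by rw [hpair]; exact hh))
      refine ⟨f', hf'B, ?_, ?_⟩
      · rw [hpair]
        exact key p q f' (hsubA hpB) (hsubA hqB) hpq (hB₂.subset_ground hf'B.1) hf'pq
      · rw [hpair]
        intro hEq
        have hmem : f' ∈ ({x, y, z} : Set α) := by rw [← hEq]; exact Or.inl rfl
        rw [hAfp] at hmem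
        rcases hmem with h | h
        · exact hf'f h
        · exact hf'pq h
    · exact ⟨f, hf, hBase', hA'⟩
  -- exchange property for N₂
  have exch₂ : Matroid.ExchangeProperty
      (fun B => M.IsBase B ∧ 2 ≤ (B ∩ ({x, y, z} : Set α)).ncard) := by
    rintro B₁ B₂ ⟨hB₁, hA₁⟩ ⟨hB₂, hA₂⟩ e he
    have hfB₁ : B₁.Finite := hfin.subset hB₁.subset_ground
    have hfB₂ : B₂.Finite := hfin.subset hB₂.subset_ground
    have hB₂B₁ : (B₂ \ B₁).Nonempty := by
      rw [nonempty_iff_ne_empty]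
      intro h
      have hsub : B₂ ⊆ B₁ := by rwa [diff_eq_empty] at h
      have heq : B₂ = B₁ := Set.eq_of_subset_of_ncard_le hsub
        (by rw [base_ncard hfin hrank hB₁, base_ncard hfin hrank hB₂]) hfB₁
      exact he.2 (heq ▸ he.1)
    have hcard2 : (B₁ \ {e}).ncard = 2 := by
      rw [Set.ncard_diff_singleton_of_mem he.1, base_ncard hfin hrank hB₁]
    by_cases hcase : ∃ p q, p ∈ (B₁ \ {e}) ∩ ({x, y, z} : Set α) ∧
        q ∈ (B₁ \ {e}) ∩ ({x, y, z} : Set α) ∧ p ≠ q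
    · obtain ⟨p, q, hp, hq, hpq⟩ := hcase
      have hpair : B₁ \ {e} = {p, q} := by
        refine (Set.eq_of_subset_of_ncard_le ?_ ?_ (hfB₁.subset diff_subset)).symm
        · rintro t (rfl | rfl)
          exacts [hp.1, hq.1]
        · rw [hcard2, Set.ncard_pair hpq]
      obtain ⟨f, hf⟩ := hB₂B₁
      have hfE : f ∈ M.E := hB₂.subset_ground hf.1
      have hfpq : f ∉ ({p, q} : Set α) := fun hh =>
        hf.2 (diff_subset (show f ∈ B₁ \ {e} by rw [hpair]; exact hh))
      refine ⟨f, hf, ?_, ?_⟩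
      · rw [hpair]
        exact key p q f hp.2 hq.2 hpq hfE hfpq
      · rw [hpair]
        have hsub2 : ({p, q} : Set α) ⊆ insert f {p, q} ∩ ({x, y, z} : Set α) := by
          rintro t (rfl | rfl)
          exacts [⟨Or.inr (Or.inl rfl), hp.2⟩, ⟨Or.inr (Or.inr rfl), hq.2⟩]
        calc 2 = ({p, q} : Set α).ncard := (Set.ncard_pair hpq).symm
          _ ≤ _ := Set.ncard_le_ncard hsub2 ((toFinite _).inter_of_left _)
    · push_neg at hcase
      obtain ⟨p, hpB, q, hqB, hpq⟩ :=
        (Set.one_lt_ncard (s := B₁ ∩ {x, y, z}) (hfB₁.inter_of_left _)).mp (by omega)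
      have hp₀ : ∃ p₀, p₀ ∈ (B₁ \ {e}) ∩ ({x, y, z} : Set α) := by
        by_cases hpe : p = e
        · refine ⟨q, ⟨⟨hqB.1, fun hh => ?_⟩, hqB.2⟩⟩
          rw [mem_singleton_iff] at hh
          exact hpq (hpe.trans hh.symm)
        · exact ⟨p, ⟨⟨hpB.1, fun hh => hpe (by rwa [mem_singleton_iff] at hh)⟩, hpB.2⟩⟩
      obtain ⟨p₀, hp₀⟩ := hp₀
      have hfex : ∃ f, f ∈ B₂ ∩ ({x, y, z} : Set α) ∧ f ∉ B₁ := by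
        obtain ⟨p₂, hp₂, q₂, hq₂, hpq₂⟩ :=
          (Set.one_lt_ncard (s := B₂ ∩ {x, y, z}) (hfB₂.inter_of_left _)).mp (by omega)
        by_cases h1 : p₂ ∈ B₁
        · by_cases h2 : q₂ ∈ B₁
          · exfalso
            refine hpq₂ (hcase p₂ q₂
              ⟨⟨h1, fun hh => he.2 (by rw [mem_singleton_iff] at hh; rw [← hh]; exact hp₂.1)⟩,
                hp₂.2⟩
              ⟨⟨h2, fun hh => he.2 (by rw [mem_singleton_iff] at hh; rw [← hh]; exact hq₂.1)⟩,
                hq₂.2⟩)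
          · exact ⟨q₂, hq₂, h2⟩
        · exact ⟨p₂, hp₂, h1⟩
      obtain ⟨f, hfBA, hfB₁'⟩ := hfex
      have hfp₀ : f ≠ p₀ := fun h => hfB₁' (h ▸ (diff_subset hp₀.1))
      obtain ⟨c, d, hcd, hpair⟩ := Set.ncard_eq_two.mp hcard2
      have hp₀cd : p₀ ∈ ({c, d} : Set α) := by rw [← hpair]; exact hp₀.1
      obtain ⟨w, hw, hp₀w⟩ : ∃ w, B₁ \ {e} = {p₀, w} ∧ p₀ ≠ w := by
        rcases hp₀cd with rfl | rfl
        · exact ⟨d, hpair, hcd⟩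
        · exact ⟨c, by rw [hpair, Set.pair_comm], hcd.symm⟩
      have hwB₁ : w ∈ B₁ := diff_subset (show w ∈ B₁ \ {e} by rw [hw]; exact Or.inr rfl)
      have hwE : w ∈ M.E := hB₁.subset_ground hwB₁
      have hwf : w ≠ f := fun h => hfB₁' (h ▸ hwB₁)
      have hgoal : insert f (B₁ \ {e}) = insert w {p₀, f} := by
        rw [hw]
        ext t
        simp only [mem_insert_iff, mem_singleton_iff]
        tauto
      refine ⟨f, ⟨hfBA.1, hfB₁'⟩, ?_, ?_⟩
      · rw [hgoal]
        refine key p₀ f w hp₀.2 hfBA.2 (Ne.symm hfp₀) hwE ?_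
        rintro (rfl | rfl)
        · exact hp₀w rfl
        · exact hwf rfl
      · rw [hgoal]
        have hsub2 : ({p₀, f} : Set α) ⊆ insert w {p₀, f} ∩ ({x, y, z} : Set α) := by
          rintro t (rfl | rfl)
          exacts [⟨Or.inr (Or.inl rfl), hp₀.2⟩, ⟨Or.inr (Or.inr rfl), hfBA.2⟩]
        calc 2 = ({p₀, f} : Set α).ncard := (Set.ncard_pair (Ne.symm hfp₀)).symm
          _ ≤ _ := Set.ncard_le_ncard hsub2 ((toFinite _).inter_of_left _)
  refine ⟨?_, ?_, ?_, ?_⟩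
  · refine ⟨Matroid.ofIsBaseOfFinite hfin (fun B => M.IsBase B ∧ B ≠ ({x, y, z} : Set α))
      ⟨B₀, hB₀, hB₀ne⟩ exch₁ (fun B hB => hB.1.subset_ground), by simp, fun B => ?_⟩
    simp only [Matroid.ofIsBaseOfFinite_isBase]
    constructor
    · rintro ⟨hB, hne⟩
      exact ⟨hB, (hBiff₁ B hB).mp hne⟩
    · rintro ⟨hB, hle⟩
      exact ⟨hB, (hBiff₁ B hB).mpr hle⟩
  · refine ⟨Matroid.ofIsBaseOfFinite hfin
      (fun B => M.IsBase B ∧ 2 ≤ (B ∩ ({x, y, z} : Set α)).ncard)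
      ⟨{x, y, z}, baseA, by rw [inter_self, hA3]; omega⟩ exch₂
      (fun B hB => hB.1.subset_ground), by simp, fun B => ?_⟩
    simp only [Matroid.ofIsBaseOfFinite_isBase]
  · exact ⟨{x, y, z}, baseA, by rw [inter_self, hA3]; omega⟩
  · exact ⟨B₀, hB₀, by omega⟩

end PaperWMO
end

section
/- Let M be a connected simple matroid of rank 3 on a finite ground set E, and let {A1, A2, A3} be a 3-partition in M. Let 𝓕 denote the (finite) set of facet-defining flats of rank 2 of M. Then the sum over F ∈ 𝓕 of f(|F|) is at most e(|A1|) + e(|A2|) + e(|A3|), where e(k) = k(k−1)/2 and f(n) = ⌊n/2⌋ · ⌊(n−1)/2⌋. -/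
open Set Matroid

namespace PaperWMO

variable {α : Type*}

/-! ### Auxiliary numeric lemmas -/

private lemma f_le_choose (b : ℕ) : b / 2 * ((b - 1) / 2) ≤ b.choose 2 := by
  rw [Nat.choose_two_right, Nat.le_div_iff_mul_le two_pos]
  calc b / 2 * ((b - 1) / 2) * 2 = b / 2 * ((b - 1) / 2 * 2) := by ring
    _ ≤ b * (b - 1) := Nat.mul_le_mul (Nat.div_le_self _ _) (Nat.div_mul_le_self _ _)

private lemma f_step (n : ℕ) : (n + 2) / 2 * ((n + 2 - 1) / 2) = n / 2 * ((n - 1) / 2) + n := by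
  obtain ⟨k, rfl⟩ | ⟨k, rfl⟩ := Nat.even_or_odd n
  · have h1 : (k + k + 2) / 2 = k + 1 := by omega
    have h2 : (k + k + 2 - 1) / 2 = k := by omega
    have h3 : (k + k) / 2 = k := by omega
    have h4 : (k + k - 1) / 2 = k - 1 := by omega
    rw [h1, h2, h3, h4]
    cases k with
    | zero => simp
    | succ m => simp only [Nat.succ_sub_one]; ring
  · have h1 : (2 * k + 1 + 2) / 2 = k + 1 := by omega
    have h2 : (2 * k + 1 + 2 - 1) / 2 = k + 1 := by omega
    have h3 : (2 * k + 1) / 2 = k := by omega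
    have h4 : (2 * k + 1 - 1) / 2 = k := by omega
    rw [h1, h2, h3, h4]
    ring

private lemma f_le_aux : ∀ n : ℕ, ∀ a b : ℕ, a + b = n →
    n / 2 * ((n - 1) / 2) ≤ a.choose 2 + b.choose 2 := by
  intro n
  induction n using Nat.strong_induction_on with
  | _ n ih =>
    intro a b hab
    match a, b with
    | 0, b =>
      have := f_le_choose b
      simp only [Nat.zero_add] at hab
      subst hab
      simpa using this
    | a + 1, 0 =>
      have := f_le_choose (a + 1)
      simp only [Nat.add_zero] at hab
      subst hab
      simpa using this
    | a + 1, b + 1 =>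
      have hn : a + b + 2 = n := by omega
      have hih := ih (a + b) (by omega) a b rfl
      have hca : (a + 1).choose 2 = a.choose 2 + a := by
        rw [Nat.choose_succ_succ]
        simp [Nat.choose_one_right, Nat.add_comm]
      have hcb : (b + 1).choose 2 = b.choose 2 + b := by
        rw [Nat.choose_succ_succ]
        simp [Nat.choose_one_right, Nat.add_comm]
      have hstep := f_step (a + b)
      rw [← hn, hstep, hca, hcb]
      omega

/-! ### Auxiliary counting lemma -/

private lemma sum_pairs_le (𝓕 : Finset (Set α)) (A : Set α) (hA : A.Finite)
    (hsub : ∀ F ∈ 𝓕, ∀ F' ∈ 𝓕, F ≠ F' → (F ∩ F').Subsingleton) :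
    ∑ F ∈ 𝓕, ((F ∩ A).ncard).choose 2 ≤ (A.ncard).choose 2 := by
  classical
  set a : Finset α := hA.toFinset with ha
  set P : Set α → Finset (Finset α) :=
    fun F => (a.powersetCard 2).filter (fun p => (p : Set α) ⊆ F) with hP
  have hcard : ∀ F : Set α, (P F).card = ((F ∩ A).ncard).choose 2 := by
    intro F
    have hFA : (F ∩ A).Finite := hA.subset inter_subset_right
    have hPF : P F = hFA.toFinset.powersetCard 2 := by
      ext p
      simp only [hP, Finset.mem_filter, Finset.mem_powersetCard, ha,
        Set.Finite.subset_toFinset]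
      constructor
      · rintro ⟨⟨hpa, hp2⟩, hpF⟩
        exact ⟨fun x hx => ⟨hpF hx, hpa hx⟩, hp2⟩
      · rintro ⟨hpFA, hp2⟩
        exact ⟨⟨fun x hx => (hpFA hx).2, hp2⟩, fun x hx => (hpFA hx).1⟩
    rw [hPF, Finset.card_powersetCard, ← Set.ncard_eq_toFinset_card _ hFA]
  have hdisj : ∀ F ∈ 𝓕, ∀ F' ∈ 𝓕, F ≠ F' → Disjoint (P F) (P F') := by
    intro F hF F' hF' hne
    rw [Finset.disjoint_left]
    rintro p hp hp'
    simp only [hP, Finset.mem_filter, Finset.mem_powersetCard] at hp hp'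
    obtain ⟨x, y, hxy, rfl⟩ := Finset.card_eq_two.mp hp.1.2
    have hx : x ∈ F ∩ F' := ⟨hp.2 (by simp), hp'.2 (by simp)⟩
    have hy : y ∈ F ∩ F' := ⟨hp.2 (by simp), hp'.2 (by simp)⟩
    exact hxy (hsub F hF F' hF' hne hx hy)
  calc ∑ F ∈ 𝓕, ((F ∩ A).ncard).choose 2 = ∑ F ∈ 𝓕, (P F).card := by
        simp_rw [hcard]
    _ = (𝓕.biUnion P).card := (Finset.card_biUnion hdisj).symm
    _ ≤ (a.powersetCard 2).card := by
        apply Finset.card_le_card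
        intro p hp
        obtain ⟨F, _, hpF⟩ := Finset.mem_biUnion.mp hp
        exact (Finset.mem_filter.mp hpF).1
    _ = (A.ncard).choose 2 := by
        rw [Finset.card_powersetCard, ← Set.ncard_eq_toFinset_card _ hA]

/-! ### Auxiliary matroid lemmas -/

private lemma rk_eq_of_basis' {M : Matroid α} (hfin : M.E.Finite) {I X : Set α}
    (hI : M.IsBasis' I X) : rk M X = I.ncard := by
  have hIfin : I.Finite := hfin.subset hI.indep.subset_ground
  have hub : ∀ n ∈ {n : ℕ | ∃ J, M.Indep J ∧ J ⊆ X ∧ J.ncard = n}, n ≤ I.ncard := by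
    rintro n ⟨J, hJ, hJX, rfl⟩
    have hJfin : J.Finite := hfin.subset hJ.subset_ground
    have hle : J.encard ≤ I.encard := by
      by_contra hlt
      push_neg at hlt
      obtain ⟨e, he, hi⟩ := hI.indep.augment hJ hlt
      exact he.2 (hI.mem_of_insert_indep (hJX he.1) hi)
    rw [Set.ncard_def, Set.ncard_def]
    exact ENat.toNat_le_toNat hle hIfin.encard_lt_top.ne
  have hmem : I.ncard ∈ {n : ℕ | ∃ J, M.Indep J ∧ J ⊆ X ∧ J.ncard = n} :=
    ⟨I, hI.indep, hI.subset, rfl⟩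
  exact le_antisymm (csSup_le ⟨I.ncard, hmem⟩ hub) (le_csSup ⟨I.ncard, hub⟩ hmem)

private lemma flat_helper {M : Matroid α} (hfin : M.E.Finite) (hsimple : IsSimple M)
    {F F' : Set α} (hF : IsFlat M F) (hrF : rk M F = 2)
    (hF' : IsFlat M F') (hrF' : rk M F' = 2) {x y z : α}
    (hx : x ∈ F ∩ F') (hy : y ∈ F ∩ F') (hxy : x ≠ y) (hz : z ∈ F' \ F) : False := by
  have hFE := hF.1
  have hF'E := hF'.1
  have hxyE : ({x, y} : Set α) ⊆ M.E := by
    rintro w (rfl | rfl)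
    · exact hFE hx.1
    · exact hFE hy.1
  have hxyI : M.Indep {x, y} := hsimple _ hxyE (by rw [Set.ncard_pair hxy])
  have hxyF' : ({x, y} : Set α) ⊆ F' := by
    rintro w (rfl | rfl)
    · exact hx.2
    · exact hy.2
  obtain ⟨J, hJ, hsubJ⟩ := hxyI.subset_isBasis_of_subset hxyF' hF'E
  have hJcard : J.ncard = 2 := by
    rw [← rk_eq_of_basis' hfin hJ.isBasis']
    exact hrF'
  have hxy_eq : ({x, y} : Set α) = J :=
    Set.eq_of_subset_of_ncard_le hsubJ
      (by rw [hJcard, Set.ncard_pair hxy]) (hfin.subset hJ.indep.subset_ground)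
  have hb : M.IsBasis {x, y} F' := hxy_eq ▸ hJ
  have hxyF : ({x, y} : Set α) ⊆ F := by
    rintro w (rfl | rfl)
    · exact hx.1
    · exact hy.1
  have hzcl : z ∈ M.closure F :=
    M.closure_subset_closure hxyF (hb.subset_closure hz.1)
  obtain ⟨I, hIb⟩ := M.exists_isBasis F hFE
  have hins : insert z F ⊆ M.E := insert_subset (hF'E hz.1) hFE
  have hIb2 : M.IsBasis I (insert z F) := by
    refine hIb.indep.isBasis_of_subset_of_subset_closure
      (hIb.subset.trans (subset_insert _ _)) ?_
    rw [hIb.closure_eq_closure]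
    exact insert_subset hzcl (M.subset_closure F hFE)
  have heq : insert z F = F := by
    refine hF.2 _ (subset_insert _ _) hins ?_
    rw [rk_eq_of_basis' hfin hIb2.isBasis', rk_eq_of_basis' hfin hIb.isBasis']
  exact hz.2 (heq ▸ mem_insert z F)

private lemma flat_inter_subsingleton {M : Matroid α} (hfin : M.E.Finite)
    (hsimple : IsSimple M) {F F' : Set α} (hF : IsFlat M F) (hrF : rk M F = 2)
    (hF' : IsFlat M F') (hrF' : rk M F' = 2) (hne : F ≠ F') :
    (F ∩ F').Subsingleton := by
  intro u hu v hv
  by_contra huv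
  have : ¬ (F ⊆ F' ∧ F' ⊆ F) := fun ⟨h1, h2⟩ => hne (h1.antisymm h2)
  rcases not_and_or.mp this with h | h
  · obtain ⟨z, hzF, hzF'⟩ := not_subset.mp h
    exact flat_helper hfin hsimple hF' hrF' hF hrF
      ⟨hu.2, hu.1⟩ ⟨hv.2, hv.1⟩ huv ⟨hzF, hzF'⟩
  · obtain ⟨z, hzF', hzF⟩ := not_subset.mp h
    exact flat_helper hfin hsimple hF hrF hF' hrF' hu hv huv ⟨hzF', hzF⟩

/-- Counting bound for a 3-partition: the sum of `f(|F|)` over all facet-defining flats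
`F` of rank 2 is at most `e(|A₁|) + e(|A₂|) + e(|A₃|)`, where `e(k) = k(k-1)/2` and
`f(n) = ⌊n/2⌋⌊(n-1)/2⌋`. -/
theorem three_partition_count_bound (M : Matroid α) (hfin : M.E.Finite)
    (hconn : Conn M) (hsimple : IsSimple M) (hrank : rk M M.E = 3)
    (A₁ A₂ A₃ : Set α) (hpart : ThreePartition M A₁ A₂ A₃)
    (𝓕 : Finset (Set α)) (h𝓕 : ∀ F : Set α, F ∈ 𝓕 ↔ FacetFlat2 M F) :
    ∑ F ∈ 𝓕, (F.ncard / 2) * ((F.ncard - 1) / 2) ≤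
      A₁.ncard * (A₁.ncard - 1) / 2 + A₂.ncard * (A₂.ncard - 1) / 2 +
        A₃.ncard * (A₃.ncard - 1) / 2 := by
  classical
  obtain ⟨hUnion, h12, h23, h13, -, -, -, hNoF, -, -, -⟩ := hpart
  have hA1 : A₁.Finite := hfin.subset (by rw [← hUnion]; exact fun x hx => Or.inl (Or.inl hx))
  have hA2 : A₂.Finite := hfin.subset (by rw [← hUnion]; exact fun x hx => Or.inl (Or.inr hx))
  have hA3 : A₃.Finite := hfin.subset (by rw [← hUnion]; exact fun x hx => Or.inr hx)
  have hsub : ∀ F ∈ 𝓕, ∀ F' ∈ 𝓕, F ≠ F' → (F ∩ F').Subsingleton := by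
    intro F hF F' hF' hne
    obtain ⟨hFflat, hFrk, -, -⟩ := (h𝓕 F).mp hF
    obtain ⟨hF'flat, hF'rk, -, -⟩ := (h𝓕 F').mp hF'
    exact flat_inter_subsingleton hfin hsimple hFflat hFrk hF'flat hF'rk hne
  have hpt : ∀ F ∈ 𝓕, F.ncard / 2 * ((F.ncard - 1) / 2) ≤
      ((F ∩ A₁).ncard).choose 2 + ((F ∩ A₂).ncard).choose 2 + ((F ∩ A₃).ncard).choose 2 := by
    intro F hF
    obtain ⟨hFflat, hFrk, -, -⟩ := (h𝓕 F).mp hF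
    have hFE : F ⊆ M.E := hFflat.1
    have hFfin : F.Finite := hfin.subset hFE
    have hFcover : F = (F ∩ A₁) ∪ (F ∩ A₂) ∪ (F ∩ A₃) := by
      rw [← inter_union_distrib_left, ← inter_union_distrib_left, hUnion]
      exact (inter_eq_left.mpr hFE).symm
    have hone : F ∩ A₁ = ∅ ∨ F ∩ A₂ = ∅ ∨ F ∩ A₃ = ∅ := by
      by_contra hcon
      push_neg at hcon
      exact hNoF ⟨F, (h𝓕 F).mp hF, hcon.1, hcon.2.1, hcon.2.2⟩
    have hf1 : (F ∩ A₁).Finite := hFfin.subset inter_subset_left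
    have hf2 : (F ∩ A₂).Finite := hFfin.subset inter_subset_left
    have hf3 : (F ∩ A₃).Finite := hFfin.subset inter_subset_left
    rcases hone with h0 | h0 | h0
    · have hU := hFcover
      rw [h0, Set.empty_union] at hU
      have hcard : (F ∩ A₂).ncard + (F ∩ A₃).ncard = F.ncard := by
        rw [← Set.ncard_union_eq (h23.mono inter_subset_right inter_subset_right) hf2 hf3, ← hU]
      have := f_le_aux F.ncard _ _ hcard
      simp only [h0, Set.ncard_empty, Nat.choose]
      omega
    · have hU := hFcover
      rw [h0, Set.union_empty] at hU
      have hcard : (F ∩ A₁).ncard + (F ∩ A₃).ncard = F.ncard := by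
        rw [← Set.ncard_union_eq (h13.mono inter_subset_right inter_subset_right) hf1 hf3, ← hU]
      have := f_le_aux F.ncard _ _ hcard
      simp only [h0, Set.ncard_empty, Nat.choose]
      omega
    · have hU := hFcover
      rw [h0, Set.union_empty] at hU
      have hcard : (F ∩ A₁).ncard + (F ∩ A₂).ncard = F.ncard := by
        rw [← Set.ncard_union_eq (h12.mono inter_subset_right inter_subset_right) hf1 hf2, ← hU]
      have := f_le_aux F.ncard _ _ hcard
      simp only [h0, Set.ncard_empty, Nat.choose]
      omega
  calc ∑ F ∈ 𝓕, F.ncard / 2 * ((F.ncard - 1) / 2)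
      ≤ ∑ F ∈ 𝓕, (((F ∩ A₁).ncard).choose 2 + ((F ∩ A₂).ncard).choose 2 +
          ((F ∩ A₃).ncard).choose 2) := Finset.sum_le_sum hpt
    _ = (∑ F ∈ 𝓕, ((F ∩ A₁).ncard).choose 2) + (∑ F ∈ 𝓕, ((F ∩ A₂).ncard).choose 2) +
          (∑ F ∈ 𝓕, ((F ∩ A₃).ncard).choose 2) := by
        rw [Finset.sum_add_distrib, Finset.sum_add_distrib]
    _ ≤ (A₁.ncard).choose 2 + (A₂.ncard).choose 2 + (A₃.ncard).choose 2 :=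
        add_le_add (add_le_add (sum_pairs_le 𝓕 A₁ hA1 hsub) (sum_pairs_le 𝓕 A₂ hA2 hsub))
          (sum_pairs_le 𝓕 A₃ hA3 hsub)
    _ = A₁.ncard * (A₁.ncard - 1) / 2 + A₂.ncard * (A₂.ncard - 1) / 2 +
          A₃.ncard * (A₃.ncard - 1) / 2 := by
        rw [Nat.choose_two_right, Nat.choose_two_right, Nat.choose_two_right]

end PaperWMO
end

section
/- Let M be a connected simple matroid of rank 3 on a finite ground set E, and let M' be a connected matroid on E whose every base is a base of M. Suppose A ⊆ E is a flat of M' with r_{M'}(A) = 1, let B ⊆ E be a nonempty set disjoint from A, and let C ⊆ B be a nonempty set of vertices of the graph g(A,B) on which the induced subgraph of g(A,B) is connected. Then r_{M'}(A ∪ C) = 2. -/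
open Set Matroid

namespace PaperWMO

variable {α : Type*}

lemma bddAbove_rkSet (M : Matroid α) (hfin : M.E.Finite) (X : Set α) :
    BddAbove {n : ℕ | ∃ I, M.Indep I ∧ I ⊆ X ∧ I.ncard = n} := by
  refine ⟨M.E.ncard, ?_⟩
  rintro n ⟨I, hI, -, rfl⟩
  exact Set.ncard_le_ncard hI.subset_ground hfin

lemma rk_mono (M : Matroid α) (hfin : M.E.Finite) {X Y : Set α} (h : X ⊆ Y) :
    rk M X ≤ rk M Y := by
  apply csSup_le_csSup (bddAbove_rkSet M hfin Y)
  · exact ⟨0, ∅, M.empty_indep, empty_subset _, by simp⟩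
  · rintro n ⟨I, hI, hIX, rfl⟩
    exact ⟨I, hI, hIX.trans h, rfl⟩

lemma indep_encard_le_of_basis (M : Matroid α) {I J X : Set α} (hI : M.IsBasis I X)
    (hJ : M.Indep J) (hJX : J ⊆ X) : J.encard ≤ I.encard := by
  obtain ⟨J', hJ', hJJ'⟩ := hJ.subset_isBasis_of_subset hJX hI.subset_ground
  exact (Set.encard_le_encard hJJ').trans_eq (hJ'.encard_eq_encard hI)

lemma basis_rk_eq (M : Matroid α) (hfin : M.E.Finite) {I X : Set α} (hI : M.IsBasis I X) :
    rk M X = I.ncard := by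
  apply le_antisymm
  · refine csSup_le ⟨I.ncard, I, hI.indep, hI.subset, rfl⟩ ?_
    rintro n ⟨J, hJ, hJX, rfl⟩
    have hle := indep_encard_le_of_basis M hI hJ hJX
    have hIf : I.Finite := hfin.subset hI.indep.subset_ground
    have hJf : J.Finite := hfin.subset hJ.subset_ground
    rwa [← hJf.cast_ncard_eq, ← hIf.cast_ncard_eq, Nat.cast_le] at hle
  · exact le_csSup (bddAbove_rkSet M hfin X) ⟨I, hI.indep, hI.subset, rfl⟩

lemma indep_singleton_of_conn (M' : Matroid α) (hconn' : Conn M') {x y : α}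
    (hx : x ∈ M'.E) (hy : y ∈ M'.E) (hxy : x ≠ y) {e : α} (he : e ∈ M'.E) :
    M'.Indep {e} := by
  by_contra hdep
  apply hconn'.2
  have hdisj : Disjoint ({e} : Set α) (M'.E \ {e}) := by
    simp [Set.disjoint_left]
  refine ⟨M' ↾ {e}, M' ↾ (M'.E \ {e}), by simp only [restrict_ground_eq]; exact hdisj, by simp, ?_, ?_⟩
  · rcases eq_or_ne x e with rfl | hxe
    · exact ⟨y, by simpa using ⟨hy, hxy.symm⟩⟩
    · exact ⟨x, by simpa using ⟨hx, hxe⟩⟩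
  · apply ext_indep
    · rw [disjointSum_ground_eq, restrict_ground_eq, restrict_ground_eq,
        Set.union_diff_cancel (singleton_subset_iff.mpr he)]
    intro I hIE
    simp only [disjointSum_indep_iff, restrict_ground_eq, restrict_indep_iff]
    constructor
    · intro h
      have heI : e ∉ I := fun heI => hdep (h.subset (singleton_subset_iff.mpr heI))
      have h1 : I ∩ {e} = ∅ := Set.inter_singleton_eq_empty.mpr heI
      have h2 : I ∩ (M'.E \ {e}) = I :=
        Set.inter_eq_left.mpr (Set.subset_diff_singleton hIE heI)
      rw [h1, h2]
      refine ⟨⟨M'.empty_indep, empty_subset _⟩, ⟨h, Set.subset_diff_singleton hIE heI⟩, ?_⟩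
      rw [Set.union_diff_cancel (singleton_subset_iff.mpr he)]
      exact hIE
    · rintro ⟨⟨h1, -⟩, ⟨h2, -⟩, -⟩
      have heI : e ∉ I := by
        intro heI
        exact hdep (h1.subset (Set.subset_inter (singleton_subset_iff.mpr heI) Subset.rfl))
      rwa [Set.inter_eq_left.mpr (Set.subset_diff_singleton hIE heI)] at h2

/-- If `A` is a rank-1 flat of an included matroid `M'` and `C` is a nonempty set of
vertices of the graph `g(A,B)` on which the induced subgraph is connected, then
`A ∪ C` has rank 2 in `M'`. -/
theorem rank_of_flat_union_connected_set (M M' : Matroid α) (hfin : M.E.Finite)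
    (hconn : Conn M) (hsimple : IsSimple M) (hrank : rk M M.E = 3)
    (hE : M'.E = M.E) (hconn' : Conn M')
    (hsub : ∀ B : Set α, M'.IsBase B → M.IsBase B)
    (A : Set α) (hflat : IsFlat M' A) (hrA : rk M' A = 1)
    (B : Set α) (hBne : B.Nonempty) (hBE : B ⊆ M.E) (hdisj : Disjoint A B)
    (C : Set α) (hCne : C.Nonempty) (hCB : C ⊆ B)
    (hCconn : ∀ x ∈ C, ∀ y ∈ C,
      Relation.ReflTransGen (fun u v => u ∈ C ∧ v ∈ C ∧ gAdj M A B u v) x y) :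
    rk M' (A ∪ C) = 2 := by
  have hfin' : M'.E.Finite := by rw [hE]; exact hfin
  have hAE : A ⊆ M'.E := hflat.1
  have hBE' : B ⊆ M'.E := by rw [hE]; exact hBE
  -- basis of A is a singleton
  obtain ⟨IA, hIA⟩ := M'.exists_isBasis A hAE
  have hIA1 : IA.ncard = 1 := by
    have := basis_rk_eq M' hfin' hIA
    omega
  have hIAenc : IA.encard = 1 := by
    rw [← (hfin'.subset hIA.indep.subset_ground).cast_ncard_eq, hIA1]
    norm_num
  obtain ⟨a₀, ha₀⟩ := Set.ncard_eq_one.mp hIA1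
  have ha₀A : a₀ ∈ A := hIA.subset (ha₀ ▸ rfl)
  obtain ⟨b₀, hb₀B⟩ := hBne
  -- no loops in M'
  have noloop : ∀ e ∈ M'.E, M'.Indep {e} := fun e he =>
    indep_singleton_of_conn M' hconn' (hAE ha₀A) (hBE' hb₀B)
      (hdisj.ne_of_mem ha₀A hb₀B) he
  -- independent subsets of A have at most one element
  have hA1 : ∀ J, M'.Indep J → J ⊆ A → J.encard ≤ 1 := fun J hJ hJA =>
    (indep_encard_le_of_basis M' hIA hJ hJA).trans_eq hIAenc
  -- core: independent subsets of A ∪ {u, v} for adjacent u v have at most 2 elements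
  have key3 : ∀ u v : α, u ∈ B → v ∈ B → u ≠ v →
      (∃ F, FacetFlat2 M F ∧ u ∈ F ∧ v ∈ F ∧ (F ∩ A).Nonempty) →
      ∀ I, M'.Indep I → I ⊆ A ∪ {u, v} → I.encard ≤ 2 := by
    intro u v huB hvB huv hF I hI hIsub
    by_contra hgt
    push_neg at hgt
    have h3 : (3 : ℕ∞) ≤ I.encard := by
      have h := (ENat.add_one_le_iff (by norm_num : (2:ℕ∞) ≠ ⊤)).mpr hgt
      exact h
    obtain ⟨I₃, hI₃sub, hI₃card⟩ := Set.exists_subset_encard_eq h3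
    have hI₃ : M'.Indep I₃ := hI.subset hI₃sub
    have hI₃A : I₃ ⊆ A ∪ {u, v} := hI₃sub.trans hIsub
    obtain ⟨F, hFF, huF, hvF, hFA⟩ := hF
    obtain ⟨a, haF, haA⟩ := hFA
    have hau : a ≠ u := hdisj.ne_of_mem haA huB
    have hav : a ≠ v := hdisj.ne_of_mem haA hvB
    have hauvcard : ({a, u, v} : Set α).encard = 3 := by
      rw [Set.encard_insert_of_notMem (by simp [hau, hav]), Set.encard_pair huv]
      rfl
    -- u and v are in I₃
    have hmemuv : ∀ w z : α, w ≠ z → ({w, z} : Set α) = {u, v} → w ∈ I₃ := by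
      intro w z hwz hwzuv
      by_contra hwI
      have hsub' : I₃ \ {z} ⊆ A := by
        intro t ht
        rcases hI₃A ht.1 with h | h
        · exact h
        · exfalso
          rw [← hwzuv] at h
          simp only [Set.mem_insert_iff, Set.mem_singleton_iff] at h
          rcases h with rfl | rfl
          · exact hwI ht.1
          · exact ht.2 rfl
      have h1 : (I₃ \ {z}).encard ≤ 1 := hA1 _ (hI₃.subset diff_subset) hsub'
      have h2 : (3 : ℕ∞) ≤ 2 := by
        calc (3 : ℕ∞) = I₃.encard := hI₃card.symm
          _ ≤ (I₃ \ {z}).encard + ({z} : Set α).encard :=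
              Set.encard_le_encard_diff_add_encard _ _
          _ ≤ 1 + 1 := add_le_add h1 (by simp)
          _ = 2 := by norm_num
      norm_num at h2
    have huI : u ∈ I₃ := hmemuv u v huv rfl
    have hvI : v ∈ I₃ := hmemuv v u huv.symm (Set.pair_comm v u)
    -- the third element a' of I₃ lies in A
    have hane : (I₃ \ {u, v}).Nonempty := by
      rw [Set.nonempty_iff_ne_empty]
      intro hne
      rw [Set.diff_eq_empty] at hne
      have h1 : I₃.encard ≤ 2 := by
        calc I₃.encard ≤ ({u, v} : Set α).encard := Set.encard_le_encard hne
          _ = 2 := Set.encard_pair huv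
      rw [hI₃card] at h1
      norm_num at h1
    obtain ⟨a', ha'⟩ := hane
    have ha'A : a' ∈ A := by
      rcases hI₃A ha'.1 with h | h
      · exact h
      · exact absurd h ha'.2
    have ha'uv : a' ∉ ({u, v} : Set α) := ha'.2
    -- {a, u, v} is independent in M'
    have hindep_auv : M'.Indep {a, u, v} := by
      rcases eq_or_ne a a' with rfl | haa'
      · refine hI₃.subset ?_
        intro t ht
        simp only [Set.mem_insert_iff, Set.mem_singleton_iff] at ht
        rcases ht with rfl | rfl | rfl
        · exact ha'.1
        · exact huI
        · exact hvI
      · have ha : M'.Indep {a} := noloop a (hAE haA)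
        have hdep' : ¬ M'.Indep {a, a'} := by
          intro hi
          have h1 := hA1 _ hi (by
            intro t ht
            simp only [Set.mem_insert_iff, Set.mem_singleton_iff] at ht
            rcases ht with rfl | rfl
            · exact haA
            · exact ha'A)
          rw [Set.encard_pair haa'] at h1
          norm_num at h1
        have hSE : (insert a {a', u, v} : Set α) ⊆ M'.E := by
          intro t ht
          simp only [Set.mem_insert_iff, Set.mem_singleton_iff] at ht
          rcases ht with rfl | rfl | rfl | rfl
          · exact hAE haA
          · exact hAE ha'A
          · exact hBE' huB
          · exact hBE' hvB
        obtain ⟨J, hJ, haJ⟩ := ha.subset_isBasis_of_subset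
          (singleton_subset_iff.mpr (Set.mem_insert a _)) hSE
        have hI₃' : M'.Indep {a', u, v} := by
          refine hI₃.subset ?_
          intro t ht
          simp only [Set.mem_insert_iff, Set.mem_singleton_iff] at ht
          rcases ht with rfl | rfl | rfl
          · exact ha'.1
          · exact huI
          · exact hvI
        have h3' : ({a', u, v} : Set α).encard ≤ J.encard :=
          indep_encard_le_of_basis M' hJ hI₃' (Set.subset_insert _ _)
        have henc : ({a', u, v} : Set α).encard = 3 := by
          rw [Set.encard_insert_of_notMem ha'uv, Set.encard_pair huv]
          rfl
        have ha'J : a' ∉ J := by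
          intro h
          refine hdep' (hJ.indep.subset ?_)
          intro t ht
          simp only [Set.mem_insert_iff, Set.mem_singleton_iff] at ht
          rcases ht with rfl | rfl
          · exact haJ rfl
          · exact h
        have hJsub : J ⊆ ({a, u, v} : Set α) := by
          intro t ht
          have h := hJ.subset ht
          simp only [Set.mem_insert_iff, Set.mem_singleton_iff] at h ⊢
          rcases h with rfl | rfl | rfl | rfl
          · exact Or.inl rfl
          · exact absurd ht ha'J
          · exact Or.inr (Or.inl rfl)
          · exact Or.inr (Or.inr rfl)
        have hJeq : J = ({a, u, v} : Set α) := by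
          refine (Set.toFinite _).eq_of_subset_of_encard_le' hJsub ?_
          rw [hauvcard, ← henc]
          exact h3'
        rw [← hJeq]
        exact hJ.indep
    -- hence {a, u, v} is independent in M, contradicting rk M F = 2
    obtain ⟨B₀, hB₀, hsubB₀⟩ := hindep_auv.exists_isBase_superset
    have hMindep : M.Indep {a, u, v} := ((hsub _ hB₀).indep).subset hsubB₀
    have hsubF : ({a, u, v} : Set α) ⊆ F := by
      intro t ht
      simp only [Set.mem_insert_iff, Set.mem_singleton_iff] at ht
      rcases ht with rfl | rfl | rfl
      · exact haF
      · exact huF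
      · exact hvF
    have hncard3 : ({a, u, v} : Set α).ncard = 3 := by
      rw [Set.ncard_def, hauvcard]
      rfl
    have h3F : 3 ≤ rk M F :=
      le_csSup (bddAbove_rkSet M hfin F) ⟨{a, u, v}, hMindep, hsubF, hncard3⟩
    rw [hFF.2.1] at h3F
    omega
  -- rank lower bound from the flat condition
  have hflat2 : ∀ u, u ∈ B → 2 ≤ rk M' (A ∪ {u}) := by
    intro u huB
    have hAuE : A ∪ {u} ⊆ M'.E :=
      union_subset hAE (singleton_subset_iff.mpr (hBE' huB))
    have h1le : 1 ≤ rk M' (A ∪ {u}) := by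
      have := rk_mono M' hfin' (subset_union_left (s := A) (t := {u}))
      omega
    rcases Nat.lt_or_ge (rk M' (A ∪ {u})) 2 with hlt | hge
    · exfalso
      have heq : rk M' (A ∪ {u}) = rk M' A := by omega
      have hAu : A ∪ {u} = A := hflat.2 _ subset_union_left hAuE heq
      have huA : u ∈ A := by
        rw [← hAu]
        exact mem_union_right _ rfl
      exact Set.disjoint_left.mp hdisj huA huB
    · exact hge
  -- edge lemma: adjacency implies membership in the closure
  have hedge : ∀ u v : α, gAdj M A B u v → v ∈ M'.closure (A ∪ {u}) := by
    intro u v hadj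
    obtain ⟨huB, hvB, huv, hF⟩ := hadj
    have hAuE : A ∪ {u} ⊆ M'.E :=
      union_subset hAE (singleton_subset_iff.mpr (hBE' huB))
    obtain ⟨IU, hIU⟩ := M'.exists_isBasis (A ∪ {u}) hAuE
    rw [← hIU.closure_eq_closure]
    refine (hIU.indep.mem_closure_iff').mpr ⟨hBE' hvB, fun hvins => ?_⟩
    by_contra hvIU
    have hIU2 : (2 : ℕ∞) ≤ IU.encard := by
      have h2 := hflat2 u huB
      rw [basis_rk_eq M' hfin' hIU] at h2
      calc (2 : ℕ∞) = ((2 : ℕ) : ℕ∞) := by norm_num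
        _ ≤ (IU.ncard : ℕ∞) := Nat.cast_le.mpr h2
        _ = IU.encard := (hfin'.subset hIU.indep.subset_ground).cast_ncard_eq
    have h3 : (3 : ℕ∞) ≤ (insert v IU).encard := by
      rw [Set.encard_insert_of_notMem hvIU]
      calc (3 : ℕ∞) = 2 + 1 := by norm_num
        _ ≤ IU.encard + 1 := add_le_add_left hIU2 1
    have hle2 := key3 u v huB hvB huv hF (insert v IU) hvins
      (Set.insert_subset (Set.mem_union_right _ (Set.mem_insert_of_mem _ rfl))
        (hIU.subset.trans (Set.union_subset_union_right A (by
          intro t ht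
          rw [Set.mem_singleton_iff] at ht
          exact ht ▸ Set.mem_insert _ _))))
    have : (3 : ℕ∞) ≤ 2 := h3.trans hle2
    norm_num at this
  -- graph connectivity: C is contained in the closure of A ∪ {c₀}
  obtain ⟨c₀, hc₀⟩ := hCne
  have hCE : C ⊆ M'.E := fun t ht => hBE' (hCB ht)
  have hX₀E : A ∪ {c₀} ⊆ M'.E :=
    union_subset hAE (singleton_subset_iff.mpr (hCE hc₀))
  have hclC : ∀ y, Relation.ReflTransGen
      (fun u v => u ∈ C ∧ v ∈ C ∧ gAdj M A B u v) c₀ y →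
      y ∈ M'.closure (A ∪ {c₀}) := by
    intro y h
    induction h with
    | refl => exact M'.subset_closure _ hX₀E (mem_union_right _ rfl)
    | @tail b y hcb hby ih =>
        obtain ⟨hbC, hyC, hadj⟩ := hby
        have h1 := hedge b y hadj
        refine closure_subset_closure_of_subset_closure ?_ h1
        refine union_subset ((subset_union_left).trans (M'.subset_closure _ hX₀E)) ?_
        exact singleton_subset_iff.mpr ih
  have hsubcl : A ∪ C ⊆ M'.closure (A ∪ {c₀}) :=
    union_subset ((subset_union_left).trans (M'.subset_closure _ hX₀E))
      (fun y hy => hclC y (hCconn c₀ hc₀ y hy))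
  -- basis of A ∪ {c₀} has exactly two elements
  obtain ⟨I₀, hI₀⟩ := M'.exists_isBasis (A ∪ {c₀}) hX₀E
  have hub : ∀ J, M'.Indep J → J ⊆ A ∪ {c₀} → J.encard ≤ 2 := by
    intro J hJ hJsub
    have h1 : (J \ {c₀}).encard ≤ 1 := by
      refine hA1 _ (hJ.subset diff_subset) ?_
      intro t ht
      rcases hJsub ht.1 with h | h
      · exact h
      · exact absurd h ht.2
    calc J.encard ≤ (J \ {c₀}).encard + ({c₀} : Set α).encard :=
          Set.encard_le_encard_diff_add_encard _ _
      _ ≤ 1 + 1 := add_le_add h1 (by simp)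
      _ = 2 := by norm_num
  have hI₀2 : I₀.encard = 2 := by
    refine le_antisymm (hub _ hI₀.indep hI₀.subset) ?_
    have h2 := hflat2 c₀ (hCB hc₀)
    rw [basis_rk_eq M' hfin' hI₀] at h2
    calc (2 : ℕ∞) = ((2 : ℕ) : ℕ∞) := by norm_num
      _ ≤ (I₀.ncard : ℕ∞) := Nat.cast_le.mpr h2
      _ = I₀.encard := (hfin'.subset hI₀.indep.subset_ground).cast_ncard_eq
  -- compute the rank of A ∪ C
  have hACE : A ∪ C ⊆ M'.E := union_subset hAE hCE
  obtain ⟨I, hIb⟩ := M'.exists_isBasis (A ∪ C) hACE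
  rw [basis_rk_eq M' hfin' hIb]
  have hIenc : I.encard = 2 := by
    refine le_antisymm ?_ ?_
    · have hclE : M'.closure (A ∪ {c₀}) ⊆ M'.E := closure_subset_ground _ _
      obtain ⟨J, hJb, hIJ⟩ := hIb.indep.subset_isBasis_of_subset
        (hIb.subset.trans hsubcl) hclE
      calc I.encard ≤ J.encard := Set.encard_le_encard hIJ
        _ = I₀.encard := hJb.encard_eq_encard hI₀.isBasis_closure_right
        _ = 2 := hI₀2
    · rw [← hI₀2]
      refine indep_encard_le_of_basis M' hIb hI₀.indep
        (hI₀.subset.trans (Set.union_subset_union_right A ?_))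
      exact singleton_subset_iff.mpr hc₀
  rw [Set.ncard_def, hIenc]
  rfl


end PaperWMO
end

section
/- Let E = {a, b, c, d, e, f, g, h, i, j, k} be an 11-element set and let 𝓕 be the 15 triples {a,b,k}, {b,c,e}, {c,d,i}, {a,d,f}, {b,d,h}, {a,c,j}, {e,f,i}, {f,g,c}, {g,h,j}, {h,e,a}, {e,g,d}, {f,h,k}, {i,j,b}, {j,k,e}, {k,i,g}. Suppose M1 is a matroid on E whose bases are exactly the 3-element subsets B of E satisfying |B ∩ F| ≤ 2 for every F ∈ 𝓕. Then there exists no connected matroid M' on E whose set of bases is a proper subset of the set of bases of M1 and which has {a,b,c,d} as a flat with r_{M'}({a,b,c,d}) = 1 such that M'|{a,b,c,d} and M'/{a,b,c,d} are both connected. (That is, M1 has no included matroid base system having ({a,b,c,d},1)_≤ as a facet-defining inequality.) -/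
open Set Matroid

namespace PaperWMO

variable {α : Type*}

/-- If the ground set splits into two nonempty parts such that independence is
determined separately on the parts, then `M` is not connected. -/
lemma split_not_conn (M : Matroid α) (C D : Set α) (hE : M.E = C ∪ D)
    (hdis : Disjoint C D) (hC : C.Nonempty) (hD : D.Nonempty)
    (hind : ∀ I, M.Indep (I ∩ C) → M.Indep (I ∩ D) → I ⊆ C ∪ D → M.Indep I) :
    ¬ Conn M := by
  rintro ⟨-, hcon⟩
  refine hcon ⟨M ↾ C, M ↾ D, by simpa using hdis, by simpa using hC, by simpa using hD, ?_⟩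
  have hCE : C ⊆ M.E := hE ▸ subset_union_left
  have hDE : D ⊆ M.E := hE ▸ subset_union_right
  refine ext_indep (by simp [hE]) (fun ⦃I⦄ hIE => ?_)
  rw [hE] at hIE
  simp only [disjointSum_indep_iff, restrict_indep_iff, restrict_ground_eq]
  constructor
  · intro hI
    exact ⟨⟨hI.subset inter_subset_left, inter_subset_right⟩,
      ⟨hI.subset inter_subset_left, inter_subset_right⟩, hIE⟩
  · rintro ⟨⟨h1, -⟩, ⟨h2, -⟩, -⟩
    exact hind I h1 h2 hIE

/-- Transitivity of "dependent pair" among nonloops. -/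
lemma pair_dep_trans (N : Matroid α) {x y z : α} (hx : N.Indep {x}) (hy : N.Indep {y})
    (hzE : z ∈ N.E) (hxy : x ≠ y) (hyz : y ≠ z) (hxz : x ≠ z)
    (d1 : ¬ N.Indep {x, y}) (d2 : ¬ N.Indep {y, z}) : ¬ N.Indep {x, z} := by
  have hyE : y ∈ N.E := hy.subset_ground rfl
  have hxE : x ∈ N.E := hx.subset_ground rfl
  have hycx : y ∈ N.closure {x} := by
    rw [hx.mem_closure_iff_of_notMem (by simpa using hxy.symm)]
    show N.Dep {y, x}
    rw [Set.pair_comm]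
    exact ⟨d1, pair_subset hxE hyE⟩
  have hzcy : z ∈ N.closure {y} := by
    rw [hy.mem_closure_iff_of_notMem (by simpa using hyz.symm)]
    show N.Dep {z, y}
    rw [Set.pair_comm]
    exact ⟨d2, pair_subset hyE hzE⟩
  have hzcx : z ∈ N.closure {x} :=
    (N.closure_subset_closure_of_subset_closure (by simpa using hycx)) hzcy
  intro hind
  have hind' : N.Indep (insert z {x}) := by
    show N.Indep {z, x}
    rw [Set.pair_comm]; exact hind
  have := (hx.insert_indep_iff_of_notMem (by simpa using hxz.symm)).1 hind'
  exact this.2 hzcx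

/-- Splitting lemma in terms of dependent pairs. -/
lemma split_pairs_not_conn (N : Matroid α) (C D : Set α) (hE : N.E = C ∪ D)
    (hdis : Disjoint C D) (hC : C.Nonempty) (hD : D.Nonempty)
    (hCp : ∀ x ∈ C, ∀ y ∈ C, x ≠ y → ¬ N.Indep {x, y})
    (hDp : ∀ x ∈ D, ∀ y ∈ D, x ≠ y → ¬ N.Indep {x, y})
    (hcross : ∀ x ∈ C, ∀ y ∈ D, N.Indep {x, y}) : ¬ Conn N := by
  refine split_not_conn N C D hE hdis hC hD (fun I h1 h2 hIE => ?_)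
  have hsmall : ∀ (J : Set α) (X : Set α), N.Indep J → J ⊆ X →
      (∀ x ∈ X, ∀ y ∈ X, x ≠ y → ¬ N.Indep {x, y}) → J = ∅ ∨ ∃ c, J = {c} := by
    intro J X hJ hJX hp
    rcases J.eq_empty_or_nonempty with h | ⟨c, hc⟩
    · exact Or.inl h
    refine Or.inr ⟨c, (eq_singleton_iff_unique_mem).mpr ⟨hc, fun u hu => ?_⟩⟩
    by_contra hne
    exact hp u (hJX hu) c (hJX hc) hne (hJ.subset (pair_subset hu hc))
  have hIrw : I = (I ∩ C) ∪ (I ∩ D) := by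
    rw [← inter_union_distrib_left, inter_eq_self_of_subset_left hIE]
  rcases hsmall _ _ h1 inter_subset_right hCp with hc | ⟨c, hc⟩ <;>
    rcases hsmall _ _ h2 inter_subset_right hDp with hd | ⟨d, hd⟩
  · rw [hIrw, hc, hd]; simp
  · rw [hIrw, hc, hd]; simpa using (hd ▸ h2 : N.Indep {d})
  · rw [hIrw, hc, hd]; simpa using (hc ▸ h1 : N.Indep {c})
  · rw [hIrw, hc, hd]
    have hcC : c ∈ C := inter_subset_right (hc ▸ (rfl : c ∈ ({c} : Set α)) : c ∈ I ∩ C)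
    have hdD : d ∈ D := inter_subset_right (hd ▸ (rfl : d ∈ ({d} : Set α)) : d ∈ I ∩ D)
    simpa [union_singleton, insert_comm, Set.pair_comm] using hcross c hcC d hdD

lemma contract_ground_eq (M : Matroid α) (C : Set α) : (contract M C).E = M.E \ C := by
  simp [contract]

/-- Independence in the contraction, via a single nonloop `a` spanning `A`. -/
lemma contract_indep_iff_aux (M : Matroid α) (A : Set α) (hA : A ⊆ M.E) (a : α) (ha : a ∈ A)
    (haind : M.Indep {a})
    (hpairs : ∀ x ∈ A, ∀ y ∈ A, x ≠ y → ¬ M.Indep {x, y})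
    (I : Set α) (hIS : I ⊆ M.E \ A) :
    (contract M A).Indep I ↔ M.Indep (insert a I) := by
  have hSE : M.E \ A ⊆ M✶.E := by rw [dual_ground]; exact diff_subset
  rw [contract, dual_indep_iff_exists']
  constructor
  · rintro ⟨-, B, hB, hdisj⟩
    rw [isBase_restrict_iff hSE] at hB
    obtain ⟨Bs, hBs, hBeq⟩ := hB.exists_isBase
    have hBsE : Bs ⊆ M.E := by rw [← dual_ground]; exact hBs.subset_ground
    have hBc : M.IsBase (M.E \ Bs) := hBs.compl_isBase_of_dual
    have hKA : M.IsBasis ((M.E \ Bs) ∩ A) A := by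
      rw [hBc.inter_isBasis_iff_compl_inter_isBasis_dual hA, diff_diff_cancel_left hBsE, ← hBeq]
      exact hB
    have hKne : ((M.E \ Bs) ∩ A).Nonempty := by
      rcases ((M.E \ Bs) ∩ A).eq_empty_or_nonempty with h | h
      · exfalso
        have := hKA.insert_dep (e := a) (by simp [h, ha])
        rw [h, insert_empty_eq] at this
        exact this.1 haind
      · exact h
    obtain ⟨a', ha'⟩ := hKne
    have hIB : I ⊆ M.E \ Bs := by
      intro x hx
      refine ⟨(hIS hx).1, fun hxB => ?_⟩
      exact (disjoint_left.1 hdisj) hx (hBeq ▸ ⟨hxB, hIS hx⟩)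
    have hins : M.Indep (insert a' I) :=
      hBc.indep.subset (insert_subset (inter_subset_left ha') hIB)
    have hIind : M.Indep I := hins.subset (subset_insert _ _)
    have haI : a ∉ I := fun h => (hIS h).2 ha
    by_cases haa : a' = a
    · rwa [haa] at hins
    · have ha'A : a' ∈ A := ha'.2
      have ha'I : a' ∉ I := fun h => (hIS h).2 ha'A
      have ha'cl : a' ∉ M.closure I :=
        ((hIind.insert_indep_iff_of_notMem ha'I).1 hins).2
      have ha'ca : a' ∈ M.closure {a} := by
        rw [haind.mem_closure_iff_of_notMem (by simpa using haa)]
        refine ⟨fun hind => hpairs a' ha'A a ha haa ?_, ?_⟩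
        · exact hind.subset (by intro z hz; exact hz)
        · exact insert_subset (hA ha'A) (singleton_subset_iff.2 (hA ha))
      have hacl : a ∉ M.closure I := by
        intro hmem
        exact ha'cl ((M.closure_subset_closure_of_subset_closure
          (singleton_subset_iff.2 hmem)) ha'ca)
      exact (hIind.insert_indep_iff_of_notMem haI).2 ⟨hA ha, hacl⟩
  · intro hins
    obtain ⟨B, hB, hsub⟩ := hins.exists_isBase_superset
    have haB : a ∈ B := hsub (mem_insert _ _)
    have hbasisA : M.IsBasis (B ∩ A) A := by
      refine (hB.indep.subset inter_subset_left).isBasis_of_forall_insert inter_subset_right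
        (fun e he => ?_)
      have hea : e ≠ a := fun h => he.2 (h ▸ ⟨haB, ha⟩)
      refine ⟨fun hind => hpairs e he.1 a ha hea ?_,
        insert_subset (hA he.1) (inter_subset_left.trans hB.subset_ground)⟩
      exact hind.subset (pair_subset (mem_insert _ _) (mem_insert_of_mem _ ⟨haB, ha⟩))
    have hdualb := (hB.inter_isBasis_iff_compl_inter_isBasis_dual hA).1 hbasisA
    refine ⟨by simpa using hIS, (M.E \ B) ∩ (M.E \ A), ?_, ?_⟩
    · rw [isBase_restrict_iff hSE]
      exact hdualb
    · exact (disjoint_sdiff_right.mono_left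
        ((subset_insert a I).trans hsub)).mono_right inter_subset_left


lemma ncard3 {a b c : Fin 11} (hab : a ≠ b) (hac : a ≠ c) (hbc : b ≠ c) :
    ({a, b, c} : Set (Fin 11)).ncard = 3 := by
  rw [Set.ncard_insert_of_notMem (by simp [hab, hac]), Set.ncard_pair hbc]

set_option maxHeartbeats 2000000 in
/-- For the rank-3 matroid `M₁` on `E = {a,…,k}` (encoded as `Fin 11` with
`a = 0, …, k = 10`) whose rank-2 flats are the fifteen listed triples, there is no
included matroid base system having `({a,b,c,d},1)_≤` as a facet-defining inequality:
no connected matroid `M'` whose bases form a proper subset of the bases of `M₁` has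
`{a,b,c,d}` as a flat of rank 1 with `M'|{a,b,c,d}` and `M'/{a,b,c,d}` both connected. -/
theorem no_included_matroid_with_facet (M₁ : Matroid (Fin 11)) (hE : M₁.E = Set.univ)
    (hbase : ∀ B : Set (Fin 11), M₁.IsBase B ↔ (B.ncard = 3 ∧
      ∀ F ∈ ({{0, 1, 10}, {1, 2, 4}, {2, 3, 8}, {0, 3, 5}, {1, 3, 7},
              {0, 2, 9}, {4, 5, 8}, {5, 6, 2}, {6, 7, 9}, {7, 4, 0},
              {4, 6, 3}, {5, 7, 10}, {8, 9, 1}, {9, 10, 4}, {10, 8, 6}} :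
                Set (Set (Fin 11))),
        (B ∩ F).ncard ≤ 2)) :
    ¬ ∃ M' : Matroid (Fin 11), M'.E = M₁.E ∧ Conn M' ∧
      {B : Set (Fin 11) | M'.IsBase B} ⊂ {B : Set (Fin 11) | M₁.IsBase B} ∧
      IsFlat M' {0, 1, 2, 3} ∧ rk M' {0, 1, 2, 3} = 1 ∧
      Conn (M' ↾ ({0, 1, 2, 3} : Set (Fin 11))) ∧
      Conn (contract M' ({0, 1, 2, 3} : Set (Fin 11))) := by
  rintro ⟨M', hE', hConn, hss, hFlat, hrk1, hConnR, hConnC⟩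
  have hE'univ : M'.E = univ := by rw [hE', hE]
  set A : Set (Fin 11) := {0, 1, 2, 3} with hAdef
  have memA : ∀ u : Fin 11, u ∈ A ↔ (u = 0 ∨ u = 1 ∨ u = 2 ∨ u = 3) := by
    intro u; simp [hAdef]
  have zero_memA : (0 : Fin 11) ∈ A := (memA 0).2 (Or.inl rfl)
  have naF : ∀ u : Fin 11, ¬(u = 0 ∨ u = 1 ∨ u = 2 ∨ u = 3) → u ∉ A :=
    fun u h hu => h ((memA u).1 hu)
  have na4 : (4 : Fin 11) ∉ A := naF 4 (by decide)
  have na5 : (5 : Fin 11) ∉ A := naF 5 (by decide)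
  have na6 : (6 : Fin 11) ∉ A := naF 6 (by decide)
  have na7 : (7 : Fin 11) ∉ A := naF 7 (by decide)
  have na8 : (8 : Fin 11) ∉ A := naF 8 (by decide)
  have na9 : (9 : Fin 11) ∉ A := naF 9 (by decide)
  have na10 : (10 : Fin 11) ∉ A := naF 10 (by decide)
  have hScases : ∀ u : Fin 11, u ∉ A →
      u = 4 ∨ u = 5 ∨ u = 6 ∨ u = 7 ∨ u = 8 ∨ u = 9 ∨ u = 10 := by
    intro u hu
    have h : ¬(u = 0 ∨ u = 1 ∨ u = 2 ∨ u = 3) := fun h' => hu ((memA u).2 h')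
    clear hu
    revert h; revert u; decide
  have hAsub : A ⊆ M'.E := by rw [hE'univ]; exact subset_univ _
  have hsub : ∀ B, M'.IsBase B → M₁.IsBase B := fun B h => hss.1 h
  have hB3 : ∀ B, M'.IsBase B → B.ncard = 3 := fun B h => ((hbase B).1 (hsub B h)).1
  -- no loops
  have hnl : ∀ x : Fin 11, M'.Indep {x} := by
    intro x
    by_contra hx
    refine split_not_conn M' {x} (univ \ {x}) (by rw [hE'univ]; simp) disjoint_sdiff_right
      ⟨x, rfl⟩ ?_ ?_ hConn
    · by_cases h0 : x = 0
      · exact ⟨1, by simp [h0]⟩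
      · exact ⟨0, by simp [Ne.symm h0]⟩
    · intro I h1 h2 hIE
      have hxI : x ∉ I := by
        intro hxI
        apply hx
        have hIx : I ∩ {x} = {x} :=
          subset_antisymm inter_subset_right (by simp [hxI])
        exact hIx ▸ h1
      have hII : I ∩ (univ \ {x}) = I := by
        apply subset_antisymm inter_subset_left
        intro z hz
        exact ⟨hz, mem_diff_singleton.2 ⟨mem_univ z, fun h => hxI (h ▸ hz)⟩⟩
      exact hII ▸ h2
  -- bounded rank sets
  have hbdd : ∀ X : Set (Fin 11), BddAbove {n | ∃ I, M'.Indep I ∧ I ⊆ X ∧ I.ncard = n} := by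
    intro X
    refine ⟨11, ?_⟩
    rintro n ⟨I, -, -, rfl⟩
    have h := ncard_le_ncard (subset_univ I) finite_univ
    rw [ncard_univ, Nat.card_eq_fintype_card, Fintype.card_fin] at h
    exact h
  -- pairs within A are dependent
  have hpairsA : ∀ x ∈ A, ∀ y ∈ A, x ≠ y → ¬ M'.Indep {x, y} := by
    intro x hx y hy hne hind
    have h2 : 2 ∈ {n | ∃ I, M'.Indep I ∧ I ⊆ A ∧ I.ncard = n} :=
      ⟨{x, y}, hind, pair_subset hx hy, ncard_pair hne⟩
    have hle := le_csSup (hbdd A) h2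
    have hrk : sSup {n | ∃ I, M'.Indep I ∧ I ⊆ A ∧ I.ncard = n} = 1 := hrk1
    omega
  -- every element outside A forms an independent pair with 0
  have hAcl : ∀ x : Fin 11, x ∉ A → M'.Indep {0, x} := by
    intro x hxA
    by_contra hdep
    have hx0 : x ≠ 0 := by rintro rfl; exact hxA zero_memA
    have hxv : ∀ v ∈ A, ¬ M'.Indep {x, v} := by
      intro v hv hind
      by_cases hv0 : v = 0
      · subst hv0; exact hdep (by rwa [Set.pair_comm] at hind)
      · have hxv' : x ≠ v := fun h => hxA (h ▸ hv)
        have hxind : M'.Indep {x} := hnl x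
        have h0clx : (0 : Fin 11) ∈ M'.closure {x} := by
          rw [hxind.mem_closure_iff_of_notMem (by simp [Ne.symm hx0])]
          exact ⟨hdep, by rw [hE'univ]; exact subset_univ _⟩
        have hvcl0 : v ∈ M'.closure {0} := by
          rw [(hnl 0).mem_closure_iff_of_notMem (by simp [hv0])]
          refine ⟨fun h => hpairsA 0 zero_memA v hv (fun h' => hv0 h'.symm) ?_,
            by rw [hE'univ]; exact subset_univ _⟩
          rwa [show (insert v {0} : Set (Fin 11)) = {0, v} from Set.pair_comm v 0] at h
        have hvclx : v ∈ M'.closure {x} :=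
          (M'.closure_subset_closure_of_subset_closure (singleton_subset_iff.2 h0clx)) hvcl0
        have hvx : M'.Indep {v, x} := by rwa [Set.pair_comm] at hind
        have := (hxind.insert_indep_iff_of_notMem
          (show v ∉ ({x} : Set (Fin 11)) from by simpa using Ne.symm hxv')).1 hvx
        exact this.2 hvclx
    have hpairs' : ∀ u ∈ insert x A, ∀ v ∈ insert x A, u ≠ v → ¬ M'.Indep {u, v} := by
      intro u hu v hv hne
      rcases mem_insert_iff.1 hu with rfl | hu'
      · rcases mem_insert_iff.1 hv with rfl | hv'
        · exact absurd rfl hne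
        · exact hxv v hv'
      · rcases mem_insert_iff.1 hv with rfl | hv'
        · intro h; exact hxv u hu' (by rwa [Set.pair_comm] at h)
        · exact hpairsA u hu' v hv' hne
    have hrkx : rk M' (insert x A) = 1 := by
      unfold rk
      apply le_antisymm
      · refine csSup_le ⟨0, ∅, M'.empty_indep, empty_subset _, by simp⟩ ?_
        rintro n ⟨I, hI, hIX, rfl⟩
        by_contra hn
        push_neg at hn
        obtain ⟨u, v, hu, hv, hne⟩ := (Set.one_lt_ncard_iff (toFinite I)).1 (by omega)
        exact hpairs' u (hIX hu) v (hIX hv) hne (hI.subset (pair_subset hu hv))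
      · exact le_csSup (hbdd _)
          ⟨{0}, hnl 0, singleton_subset_iff.2 (mem_insert_of_mem _ zero_memA), by simp⟩
    have hflat := hFlat.2 (insert x A) (subset_insert _ _)
      (by rw [hE'univ]; exact subset_univ _) (by rw [hrkx, hrk1])
    exact hxA (hflat ▸ mem_insert x A)
  -- independent 3-sets are bases
  have hind3 : ∀ I : Set (Fin 11), M'.Indep I → I.ncard = 3 → M'.IsBase I := by
    intro I hI h3
    obtain ⟨B, hB, hIB⟩ := hI.exists_isBase_superset
    have hIB' : I = B := eq_of_subset_of_ncard_le hIB (by rw [hB3 B hB, h3]) (toFinite B)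
    rwa [hIB']
  -- the fifteen triples are dependent in M'
  have htriple : ∀ T : Set (Fin 11),
      T ∈ ({{0, 1, 10}, {1, 2, 4}, {2, 3, 8}, {0, 3, 5}, {1, 3, 7},
              {0, 2, 9}, {4, 5, 8}, {5, 6, 2}, {6, 7, 9}, {7, 4, 0},
              {4, 6, 3}, {5, 7, 10}, {8, 9, 1}, {9, 10, 4}, {10, 8, 6}} :
                Set (Set (Fin 11))) → T.ncard = 3 → ¬ M'.Indep T := by
    intro T hT h3 hind
    have h2 := ((hbase T).1 (hsub T (hind3 T hind h3))).2 T hT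
    rw [inter_self, h3] at h2
    omega
  have d458 : ¬ M'.Indep {4, 5, 8} :=
    htriple _ (by simp) (ncard3 (by decide) (by decide) (by decide))
  have d679 : ¬ M'.Indep {6, 7, 9} :=
    htriple _ (by simp) (ncard3 (by decide) (by decide) (by decide))
  have d5710 : ¬ M'.Indep {5, 7, 10} :=
    htriple _ (by simp) (ncard3 (by decide) (by decide) (by decide))
  have d9104 : ¬ M'.Indep {9, 10, 4} :=
    htriple _ (by simp) (ncard3 (by decide) (by decide) (by decide))
  have d1086 : ¬ M'.Indep {10, 8, 6} :=
    htriple _ (by simp) (ncard3 (by decide) (by decide) (by decide))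
  -- parallel swap within A for dependent triples
  have hswap : ∀ c ∈ A, ∀ x y : Fin 11, x ∉ A → y ∉ A → x ≠ y →
      ¬ M'.Indep {c, x, y} → ¬ M'.Indep {(0 : Fin 11), x, y} := by
    intro c hc x y hx hy hxy hcdep hind0
    by_cases hc0 : c = 0
    · exact hcdep (hc0 ▸ hind0)
    · have h0x : (0 : Fin 11) ≠ x := fun h => hx (h ▸ zero_memA)
      have h0y : (0 : Fin 11) ≠ y := fun h => hy (h ▸ zero_memA)
      have hcx : c ≠ x := fun h => hx (h ▸ hc)
      have hcy : c ≠ y := fun h => hy (h ▸ hc)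
      have hxyind : M'.Indep {x, y} := hind0.subset (subset_insert _ _)
      have h0c : (0 : Fin 11) ∈ M'.closure {c} := by
        rw [(hnl c).mem_closure_iff_of_notMem
          (show (0 : Fin 11) ∉ ({c} : Set (Fin 11)) from by
            simpa using fun h => hc0 h.symm)]
        exact ⟨fun h => hpairsA 0 zero_memA c hc (fun h' => hc0 h'.symm) h,
          by rw [hE'univ]; exact subset_univ _⟩
      have hccl : c ∉ M'.closure {x, y} := by
        intro hmem
        have h0cl : (0 : Fin 11) ∈ M'.closure {x, y} :=
          (M'.closure_subset_closure_of_subset_closure (singleton_subset_iff.2 hmem)) h0c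
        have := (hxyind.insert_indep_iff_of_notMem (by simp [h0x, h0y])).1 hind0
        exact this.2 h0cl
      exact hcdep ((hxyind.insert_indep_iff_of_notMem (by simp [hcx, hcy])).2
        ⟨by rw [hE'univ]; exact mem_univ c, hccl⟩)
  have mem2A : (2 : Fin 11) ∈ A := (memA 2).2 (by decide)
  have mem3A : (3 : Fin 11) ∈ A := (memA 3).2 (by decide)
  have mem1A : (1 : Fin 11) ∈ A := (memA 1).2 (by decide)
  have d056 : ¬ M'.Indep {0, 5, 6} := by
    refine hswap 2 mem2A 5 6 na5 na6 (by decide) ?_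
    rw [show ({2, 5, 6} : Set (Fin 11)) = {5, 6, 2} from by ext z; simp; tauto]
    exact htriple _ (by simp) (ncard3 (by decide) (by decide) (by decide))
  have d047 : ¬ M'.Indep {0, 4, 7} := by
    rw [show ({0, 4, 7} : Set (Fin 11)) = {7, 4, 0} from by ext z; simp; tauto]
    exact htriple _ (by simp) (ncard3 (by decide) (by decide) (by decide))
  have d046 : ¬ M'.Indep {0, 4, 6} := by
    refine hswap 3 mem3A 4 6 na4 na6 (by decide) ?_
    rw [show ({3, 4, 6} : Set (Fin 11)) = {4, 6, 3} from by ext z; simp; tauto]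
    exact htriple _ (by simp) (ncard3 (by decide) (by decide) (by decide))
  have d089 : ¬ M'.Indep {0, 8, 9} := by
    refine hswap 1 mem1A 8 9 na8 na9 (by decide) ?_
    rw [show ({1, 8, 9} : Set (Fin 11)) = {8, 9, 1} from by ext z; simp; tauto]
    exact htriple _ (by simp) (ncard3 (by decide) (by decide) (by decide))
  -- the contraction N = M' / A
  have hNE : (contract M' A).E = univ \ A := by rw [contract_ground_eq, hE'univ]
  have hNI : ∀ I : Set (Fin 11), I ⊆ univ \ A →
      ((contract M' A).Indep I ↔ M'.Indep (insert 0 I)) := by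
    intro I hI
    exact contract_indep_iff_aux M' A hAsub 0 zero_memA (hnl 0) hpairsA I (by rwa [hE'univ])
  have hN2 : ∀ x y : Fin 11, x ∉ A → y ∉ A →
      ((contract M' A).Indep {x, y} ↔ M'.Indep {0, x, y}) := by
    intro x y hx hy
    exact hNI {x, y} (pair_subset ⟨mem_univ x, hx⟩ ⟨mem_univ y, hy⟩)
  have hN1 : ∀ x : Fin 11, x ∉ A → (contract M' A).Indep {x} := by
    intro x hx
    exact (hNI {x} (singleton_subset_iff.2 ⟨mem_univ x, hx⟩)).2 (hAcl x hx)
  have Pswap : ∀ x y : Fin 11, ¬ (contract M' A).Indep {x, y} →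
      ¬ (contract M' A).Indep {y, x} :=
    fun x y h hind => h (by rwa [Set.pair_comm] at hind)
  have Pt : ∀ x y z : Fin 11, x ∉ A → y ∉ A → z ∉ A → x ≠ y → y ≠ z → x ≠ z →
      ¬ (contract M' A).Indep {x, y} → ¬ (contract M' A).Indep {y, z} →
      ¬ (contract M' A).Indep {x, z} := by
    intro x y z hx hy hz h1 h2 h3
    exact pair_dep_trans _ (hN1 x hx) (hN1 y hy) (by rw [hNE]; exact ⟨mem_univ z, hz⟩) h1 h2 h3
  -- dependent pairs in the contraction coming from the triples through A
  have p56 : ¬ (contract M' A).Indep {5, 6} := fun h => d056 ((hN2 5 6 na5 na6).1 h)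
  have p47 : ¬ (contract M' A).Indep {4, 7} := fun h => d047 ((hN2 4 7 na4 na7).1 h)
  have p46 : ¬ (contract M' A).Indep {4, 6} := fun h => d046 ((hN2 4 6 na4 na6).1 h)
  have p89 : ¬ (contract M' A).Indep {8, 9} := fun h => d089 ((hN2 8 9 na8 na9).1 h)
  have p45 : ¬ (contract M' A).Indep {4, 5} :=
    Pt 4 6 5 na4 na6 na5 (by decide) (by decide) (by decide) p46 (Pswap 5 6 p56)
  have p67 : ¬ (contract M' A).Indep {6, 7} :=
    Pt 6 4 7 na6 na4 na7 (by decide) (by decide) (by decide) (Pswap 4 6 p46) p47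
  have p57 : ¬ (contract M' A).Indep {5, 7} :=
    Pt 5 6 7 na5 na6 na7 (by decide) (by decide) (by decide) p56 p67
  have hSeq : (univ \ A : Set (Fin 11)) = ({4, 5, 6, 7, 8, 9, 10} : Set (Fin 11)) := by
    ext z
    rw [mem_diff, memA z]
    simp only [mem_univ, true_and, mem_insert_iff, mem_singleton_iff]
    revert z; decide
  -- generic "all pairs through a center are dependent" helper
  have centerPairs : ∀ c : Fin 11, c ∉ A → ∀ Q : Fin 11 → Prop, (∀ w, Q w → w ∉ A) →
      (∀ w, Q w → w ≠ c → ¬ (contract M' A).Indep {c, w}) →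
      ∀ u, Q u → ∀ v, Q v → u ≠ v → ¬ (contract M' A).Indep {u, v} := by
    intro c hc Q hQA hQc u hu v hv hne
    by_cases huc : u = c
    · subst huc; exact hQc v hv (Ne.symm hne)
    · by_cases hvc : v = c
      · subst hvc; exact Pswap _ _ (hQc u hu huc)
      · exact Pt u c v (hQA u hu) hc (hQA v hv) huc (fun h => hvc h.symm) hne
          (Pswap _ _ (hQc u hu huc)) (hQc v hv hvc)
  rcases em ((contract M' A).Indep {4, 8}) with h48 | p48
  · rcases em ((contract M' A).Indep {4, 10}) with h410 | p410
    · rcases em ((contract M' A).Indep {8, 10}) with h810 | p810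
      · -- MAIN CASE
        have c69 : (contract M' A).Indep {6, 9} := by
          by_contra p69
          exact (Pt 4 9 8 na4 na9 na8 (by decide) (by decide) (by decide)
            (Pt 4 6 9 na4 na6 na9 (by decide) (by decide) (by decide) p46 p69)
            (Pswap 8 9 p89)) h48
        have c510 : (contract M' A).Indep {5, 10} := by
          by_contra p510
          exact (Pt 4 5 10 na4 na5 na10 (by decide) (by decide) (by decide) p45 p510) h410
        have i0xy : ∀ x y : Fin 11, x ∉ A → y ∉ A → (contract M' A).Indep {x, y} →
            M'.Indep {0, x, y} := fun x y hx hy h => (hN2 x y hx hy).1 h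
        have i048 : M'.Indep {0, 4, 8} := i0xy 4 8 na4 na8 h48
        have i0410 : M'.Indep {0, 4, 10} := i0xy 4 10 na4 na10 h410
        have i410 : M'.Indep {4, 10} := i0410.subset (subset_insert _ _)
        have i810 : M'.Indep {8, 10} := (i0xy 8 10 na8 na10 h810).subset (subset_insert _ _)
        -- y ∈ cl {0, x} whenever {x, y} is dependent in the contraction
        have hclA : ∀ x y : Fin 11, x ∉ A → y ∉ A → y ∉ ({0, x} : Set (Fin 11)) →
            ¬ (contract M' A).Indep {x, y} → y ∈ M'.closure {0, x} := by
          intro x y hx hy hymem p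
          rw [(hAcl x hx).mem_closure_iff_of_notMem hymem]
          refine ⟨fun h => p ((hN2 x y hx hy).2 ?_), by rw [hE'univ]; exact subset_univ _⟩
          rwa [show (insert y ({0, x} : Set (Fin 11))) = {0, x, y} from by
            ext z; simp; tauto] at h
        -- parallel pairs in M' among {4,5,6,7}
        have key : ∀ x y z : Fin 11, x ∉ A → y ∉ A → z ∉ A →
            y ∉ ({0, x} : Set (Fin 11)) → z ∉ ({x, y} : Set (Fin 11)) →
            z ∉ ({0, x} : Set (Fin 11)) →
            ¬ (contract M' A).Indep {x, y} → ¬ M'.Indep {x, y, z} →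
            (contract M' A).Indep {x, z} → ¬ M'.Indep {x, y} := by
          intro x y z hx hy hz hy0x hzxy hz0x pxy dxyz cxz hxy
          have hzm : z ∈ M'.closure {x, y} := by
            rw [hxy.mem_closure_iff_of_notMem hzxy]
            refine ⟨fun hi => dxyz ?_, by rw [hE'univ]; exact subset_univ _⟩
            rwa [show ({z, x, y} : Set (Fin 11)) = {x, y, z} from by ext w; simp; tauto] at hi
          have hym : y ∈ M'.closure {0, x} := hclA x y hx hy hy0x pxy
          have hsubm : M'.closure {x, y} ⊆ M'.closure {0, x} := by
            apply closure_subset_closure_of_subset_closure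
            intro w hw
            rcases mem_insert_iff.1 hw with h | hw'
            · rw [h]
              exact (M'.subset_closure {0, x} (by rw [hE'univ]; exact subset_univ _))
                (by simp)
            · have h : w = y := hw'
              rw [h]
              exact hym
          have hzm' : z ∈ M'.closure {0, x} := hsubm hzm
          have hdep : ¬ M'.Indep {0, x, z} := by
            intro hi
            have := ((hAcl x hx).insert_indep_iff_of_notMem hz0x).1
              (by rwa [show ({0, x, z} : Set (Fin 11)) = insert z {0, x} from by
                ext w; simp; tauto] at hi)
            exact this.2 hzm'
          exact hdep (i0xy x z hx hz cxz)
        have m45 : ¬ M'.Indep {4, 5} :=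
          key 4 5 8 na4 na5 na8 (by simp) (by simp) (by simp) p45 d458 h48
        have m67 : ¬ M'.Indep {6, 7} :=
          key 6 7 9 na6 na7 na9 (by simp) (by simp) (by simp) p67 d679 c69
        have m57 : ¬ M'.Indep {5, 7} :=
          key 5 7 10 na5 na7 na10 (by simp) (by simp) (by simp) p57 d5710 c510
        -- closure chains
        have hpcl : ∀ p q : Fin 11, p ∉ ({q} : Set (Fin 11)) → ¬ M'.Indep {p, q} →
            p ∈ M'.closure {q} := by
          intro p q hpq h
          rw [(hnl q).mem_closure_iff_of_notMem hpq]
          exact ⟨h, by rw [hE'univ]; exact subset_univ _⟩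
        have c54 : (5 : Fin 11) ∈ M'.closure {4} :=
          hpcl 5 4 (by simp) (by rw [Set.pair_comm]; exact m45)
        have c45 : (4 : Fin 11) ∈ M'.closure {5} := hpcl 4 5 (by simp) m45
        have c57 : (5 : Fin 11) ∈ M'.closure {7} := hpcl 5 7 (by simp) m57
        have c75 : (7 : Fin 11) ∈ M'.closure {5} :=
          hpcl 7 5 (by simp) (by rw [Set.pair_comm]; exact m57)
        have c67 : (6 : Fin 11) ∈ M'.closure {7} := hpcl 6 7 (by simp) m67
        have c76 : (7 : Fin 11) ∈ M'.closure {6} :=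
          hpcl 7 6 (by simp) (by rw [Set.pair_comm]; exact m67)
        have c46m : (4 : Fin 11) ∈ M'.closure {6} :=
          (M'.closure_subset_closure_of_subset_closure (singleton_subset_iff.2 c76))
            ((M'.closure_subset_closure_of_subset_closure (singleton_subset_iff.2 c57)) c45)
        have h9L : (9 : Fin 11) ∈ M'.closure {4, 10} := by
          rw [i410.mem_closure_iff_of_notMem (by simp)]
          refine ⟨fun h => d9104 ?_, by rw [hE'univ]; exact subset_univ _⟩
          rwa [show (insert (9 : Fin 11) {4, 10}) = ({9, 10, 4} : Set (Fin 11)) from by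
            ext z; simp; tauto] at h
        have h6m : (6 : Fin 11) ∈ M'.closure {8, 10} := by
          rw [i810.mem_closure_iff_of_notMem (by simp)]
          refine ⟨fun h => d1086 ?_, by rw [hE'univ]; exact subset_univ _⟩
          rwa [show (insert (6 : Fin 11) {8, 10}) = ({10, 8, 6} : Set (Fin 11)) from by
            ext z; simp; tauto] at h
        have h4m : (4 : Fin 11) ∈ M'.closure {8, 10} :=
          (M'.closure_subset_closure_of_subset_closure (singleton_subset_iff.2 h6m)) c46m
        have h4not10 : (4 : Fin 11) ∉ M'.closure {10} :=
          (((hnl 10).insert_indep_iff_of_notMem (by simp)).1 i410).2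
        have h8L : (8 : Fin 11) ∈ M'.closure {4, 10} :=
          (Matroid.closure_exchange (M := M') (X := ({10} : Set (Fin 11))) (e := 4) (f := 8)
            ⟨h4m, h4not10⟩).1
        have h4L : (4 : Fin 11) ∈ M'.closure {4, 10} :=
          (M'.subset_closure {4, 10} (by rw [hE'univ]; exact subset_univ _)) (by simp)
        have h10L : (10 : Fin 11) ∈ M'.closure {4, 10} :=
          (M'.subset_closure {4, 10} (by rw [hE'univ]; exact subset_univ _)) (by simp)
        have h5L : (5 : Fin 11) ∈ M'.closure {4, 10} :=
          (M'.closure_subset_closure_of_subset_closure (singleton_subset_iff.2 h4L)) c54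
        have h7L : (7 : Fin 11) ∈ M'.closure {4, 10} :=
          (M'.closure_subset_closure_of_subset_closure (singleton_subset_iff.2 h5L)) c75
        have h6L : (6 : Fin 11) ∈ M'.closure {4, 10} :=
          (M'.closure_subset_closure_of_subset_closure (singleton_subset_iff.2 h7L)) c67
        have hXL : ∀ x : Fin 11, x ∉ A → x ∈ M'.closure {4, 10} := by
          intro x hx
          rcases hScases x hx with rfl | rfl | rfl | rfl | rfl | rfl | rfl
          exacts [h4L, h5L, h6L, h7L, h8L, h9L, h10L]
        have h0L : (0 : Fin 11) ∉ M'.closure {4, 10} :=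
          ((i410.insert_indep_iff_of_notMem (by simp)).1 i0410).2
        have hAL : ∀ a ∈ A, a ∉ M'.closure {4, 10} := by
          intro a ha hmem
          by_cases ha0 : a = 0
          · exact h0L (ha0 ▸ hmem)
          · apply h0L
            have h0a : (0 : Fin 11) ∈ M'.closure {a} :=
              hpcl 0 a (by simpa using fun h => ha0 h.symm)
                (hpairsA 0 zero_memA a ha (fun h => ha0 h.symm))
            exact (M'.closure_subset_closure_of_subset_closure
              (singleton_subset_iff.2 hmem)) h0a
        -- final split of M' into A and its complement
        refine absurd hConn (split_not_conn M' A (univ \ A)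
          (by rw [hE'univ]; exact (union_diff_cancel (subset_univ A)).symm)
          disjoint_sdiff_right ⟨0, zero_memA⟩ ⟨4, mem_univ 4, na4⟩ ?_)
        intro I h1 h2 hIE
        have hIAsmall : I ∩ A = ∅ ∨ ∃ a, I ∩ A = {a} := by
          rcases (I ∩ A).eq_empty_or_nonempty with h | ⟨a, ha⟩
          · exact Or.inl h
          · refine Or.inr ⟨a, eq_singleton_iff_unique_mem.mpr ⟨ha, fun u hu => ?_⟩⟩
            by_contra hne
            exact hpairsA u hu.2 a ha.2 hne (h1.subset (pair_subset hu ha))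
        rcases hIAsmall with hIA | ⟨a, hIA⟩
        · have hII : I ∩ (univ \ A) = I := by
            apply subset_antisymm inter_subset_left
            intro z hz
            refine ⟨hz, mem_univ z, fun hzA => ?_⟩
            have hzIA : z ∈ I ∩ A := ⟨hz, hzA⟩
            rw [hIA] at hzIA
            exact notMem_empty z hzIA
          exact hII ▸ h2
        · have haIA : a ∈ I ∩ A := by rw [hIA]; exact rfl
          have hIeq : I = insert a (I ∩ (univ \ A)) := by
            ext z
            simp only [mem_insert_iff, mem_inter_iff, mem_diff, mem_univ, true_and]
            constructor
            · intro hz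
              by_cases hzA : z ∈ A
              · left
                have hz' : z ∈ I ∩ A := ⟨hz, hzA⟩
                rw [hIA] at hz'
                exact hz'
              · right; exact ⟨hz, hzA⟩
            · rintro (rfl | ⟨hz, -⟩)
              exacts [haIA.1, hz]
          rw [hIeq]
          have hnotm : a ∉ I ∩ (univ \ A) := fun h => h.2.2 haIA.2
          refine (h2.insert_indep_iff_of_notMem hnotm).2
            ⟨by rw [hE'univ]; exact mem_univ a, ?_⟩
          intro hmem
          have hsubL : M'.closure (I ∩ (univ \ A)) ⊆ M'.closure {4, 10} :=
            M'.closure_subset_closure_of_subset_closure (fun z hz => hXL z hz.2.2)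
          exact hAL a haIA.2 (hsubL hmem)
      · -- p810 : split C = {8,9,10}, D = {4,5,6,7}
        have p910 : ¬ (contract M' A).Indep {9, 10} :=
          Pt 9 8 10 na9 na8 na10 (by decide) (by decide) (by decide) (Pswap 8 9 p89) p810
        have hP84 : ¬ (contract M' A).Indep {8, 4} → False := fun h => (Pswap 8 4 h) h48
        have hP94 : ¬ (contract M' A).Indep {9, 4} → False := fun h =>
          hP84 (Pt 8 9 4 na8 na9 na4 (by decide) (by decide) (by decide) p89 h)
        have hP104 : ¬ (contract M' A).Indep {10, 4} → False := fun h => (Pswap 10 4 h) h410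
        refine absurd hConnC (split_pairs_not_conn _ ({8, 9, 10} : Set (Fin 11))
          ({4, 5, 6, 7} : Set (Fin 11)) ?_ ?_ ⟨8, by simp⟩ ⟨4, by simp⟩ ?_ ?_ ?_)
        · rw [hNE, hSeq]; ext z; simp only [mem_insert_iff, mem_singleton_iff, mem_union]; tauto
        · rw [Set.disjoint_left]; intro z hz hz'
          simp only [mem_insert_iff, mem_singleton_iff] at hz hz'
          rcases hz with rfl | rfl | rfl <;> exact absurd hz' (by decide)
        · intro u hu v hv hne
          simp only [mem_insert_iff, mem_singleton_iff] at hu hv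
          refine centerPairs 8 na8 (fun w => w = 8 ∨ w = 9 ∨ w = 10) ?_ ?_ u hu v hv hne
          · rintro w (rfl | rfl | rfl); exacts [na8, na9, na10]
          · rintro w (rfl | rfl | rfl) hw
            · exact absurd rfl hw
            · exact p89
            · exact p810
        · intro u hu v hv hne
          simp only [mem_insert_iff, mem_singleton_iff] at hu hv
          refine centerPairs 4 na4 (fun w => w = 4 ∨ w = 5 ∨ w = 6 ∨ w = 7) ?_ ?_ u hu v hv hne
          · rintro w (rfl | rfl | rfl | rfl); exacts [na4, na5, na6, na7]
          · rintro w (rfl | rfl | rfl | rfl) hw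
            · exact absurd rfl hw
            · exact p45
            · exact p46
            · exact p47
        · intro u hu v hv
          simp only [mem_insert_iff, mem_singleton_iff] at hu hv
          by_contra puv
          rcases hu with rfl | rfl | rfl <;> rcases hv with rfl | rfl | rfl | rfl
          · exact hP84 puv
          · exact hP84 (Pt 8 5 4 na8 na5 na4 (by decide) (by decide) (by decide) puv
              (Pswap 4 5 p45))
          · exact hP84 (Pt 8 6 4 na8 na6 na4 (by decide) (by decide) (by decide) puv
              (Pswap 4 6 p46))
          · exact hP84 (Pt 8 7 4 na8 na7 na4 (by decide) (by decide) (by decide) puv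
              (Pswap 4 7 p47))
          · exact hP94 puv
          · exact hP94 (Pt 9 5 4 na9 na5 na4 (by decide) (by decide) (by decide) puv
              (Pswap 4 5 p45))
          · exact hP94 (Pt 9 6 4 na9 na6 na4 (by decide) (by decide) (by decide) puv
              (Pswap 4 6 p46))
          · exact hP94 (Pt 9 7 4 na9 na7 na4 (by decide) (by decide) (by decide) puv
              (Pswap 4 7 p47))
          · exact hP104 puv
          · exact hP104 (Pt 10 5 4 na10 na5 na4 (by decide) (by decide) (by decide) puv
              (Pswap 4 5 p45))
          · exact hP104 (Pt 10 6 4 na10 na6 na4 (by decide) (by decide) (by decide) puv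
              (Pswap 4 6 p46))
          · exact hP104 (Pt 10 7 4 na10 na7 na4 (by decide) (by decide) (by decide) puv
              (Pswap 4 7 p47))
    · -- p410 with h48 : split C = {4,5,6,7,10}, D = {8,9}
      have hP48F : ¬ (contract M' A).Indep {4, 8} → False := fun h => h h48
      have hP49F : ¬ (contract M' A).Indep {4, 9} → False := fun h =>
        hP48F (Pt 4 9 8 na4 na9 na8 (by decide) (by decide) (by decide) h (Pswap 8 9 p89))
      refine absurd hConnC (split_pairs_not_conn _ ({4, 5, 6, 7, 10} : Set (Fin 11))
        ({8, 9} : Set (Fin 11)) ?_ ?_ ⟨4, by simp⟩ ⟨8, by simp⟩ ?_ ?_ ?_)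
      · rw [hNE, hSeq]; ext z; simp only [mem_insert_iff, mem_singleton_iff, mem_union]; tauto
      · rw [Set.disjoint_left]; intro z hz hz'
        simp only [mem_insert_iff, mem_singleton_iff] at hz hz'
        rcases hz with rfl | rfl | rfl | rfl | rfl <;> exact absurd hz' (by decide)
      · intro u hu v hv hne
        simp only [mem_insert_iff, mem_singleton_iff] at hu hv
        refine centerPairs 4 na4 (fun w => w = 4 ∨ w = 5 ∨ w = 6 ∨ w = 7 ∨ w = 10)
          ?_ ?_ u hu v hv hne
        · rintro w (rfl | rfl | rfl | rfl | rfl); exacts [na4, na5, na6, na7, na10]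
        · rintro w (rfl | rfl | rfl | rfl | rfl) hw
          · exact absurd rfl hw
          · exact p45
          · exact p46
          · exact p47
          · exact p410
      · intro u hu v hv hne
        simp only [mem_insert_iff, mem_singleton_iff] at hu hv
        rcases hu with rfl | rfl <;> rcases hv with rfl | rfl
        · exact absurd rfl hne
        · exact p89
        · exact Pswap 8 9 p89
        · exact absurd rfl hne
      · intro u hu v hv
        simp only [mem_insert_iff, mem_singleton_iff] at hu hv
        by_contra puv
        rcases hu with rfl | rfl | rfl | rfl | rfl <;> rcases hv with rfl | rfl
        · exact hP48F puv
        · exact hP49F puv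
        · exact hP48F (Pt 4 5 8 na4 na5 na8 (by decide) (by decide) (by decide) p45 puv)
        · exact hP49F (Pt 4 5 9 na4 na5 na9 (by decide) (by decide) (by decide) p45 puv)
        · exact hP48F (Pt 4 6 8 na4 na6 na8 (by decide) (by decide) (by decide) p46 puv)
        · exact hP49F (Pt 4 6 9 na4 na6 na9 (by decide) (by decide) (by decide) p46 puv)
        · exact hP48F (Pt 4 7 8 na4 na7 na8 (by decide) (by decide) (by decide) p47 puv)
        · exact hP49F (Pt 4 7 9 na4 na7 na9 (by decide) (by decide) (by decide) p47 puv)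
        · exact hP48F (Pt 4 10 8 na4 na10 na8 (by decide) (by decide) (by decide) p410 puv)
        · exact hP49F (Pt 4 10 9 na4 na10 na9 (by decide) (by decide) (by decide) p410 puv)
  · rcases em ((contract M' A).Indep {4, 10}) with h410 | p410
    · -- p48 with h410 : split C = {4,...,9}, D = {10}
      have p49 : ¬ (contract M' A).Indep {4, 9} :=
        Pt 4 8 9 na4 na8 na9 (by decide) (by decide) (by decide) p48 p89
      have hP410F : ¬ (contract M' A).Indep {4, 10} → False := fun h => h h410
      refine absurd hConnC (split_pairs_not_conn _ ({4, 5, 6, 7, 8, 9} : Set (Fin 11))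
        ({10} : Set (Fin 11)) ?_ ?_ ⟨4, by simp⟩ ⟨10, rfl⟩ ?_ ?_ ?_)
      · rw [hNE, hSeq]; ext z; simp only [mem_insert_iff, mem_singleton_iff, mem_union]; tauto
      · rw [Set.disjoint_left]; intro z hz hz'
        simp only [mem_insert_iff, mem_singleton_iff] at hz hz'
        rcases hz with rfl | rfl | rfl | rfl | rfl | rfl <;> exact absurd hz' (by decide)
      · intro u hu v hv hne
        simp only [mem_insert_iff, mem_singleton_iff] at hu hv
        refine centerPairs 4 na4
          (fun w => w = 4 ∨ w = 5 ∨ w = 6 ∨ w = 7 ∨ w = 8 ∨ w = 9) ?_ ?_ u hu v hv hne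
        · rintro w (rfl | rfl | rfl | rfl | rfl | rfl); exacts [na4, na5, na6, na7, na8, na9]
        · rintro w (rfl | rfl | rfl | rfl | rfl | rfl) hw
          · exact absurd rfl hw
          · exact p45
          · exact p46
          · exact p47
          · exact p48
          · exact p49
      · intro u hu v hv hne
        simp only [mem_singleton_iff] at hu hv
        subst hu; subst hv
        exact absurd rfl hne
      · intro u hu v hv
        simp only [mem_insert_iff, mem_singleton_iff] at hu hv
        subst hv
        by_contra puv
        rcases hu with rfl | rfl | rfl | rfl | rfl | rfl
        · exact hP410F puv
        · exact hP410F (Pt 4 5 10 na4 na5 na10 (by decide) (by decide) (by decide) p45 puv)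
        · exact hP410F (Pt 4 6 10 na4 na6 na10 (by decide) (by decide) (by decide) p46 puv)
        · exact hP410F (Pt 4 7 10 na4 na7 na10 (by decide) (by decide) (by decide) p47 puv)
        · exact hP410F (Pt 4 8 10 na4 na8 na10 (by decide) (by decide) (by decide) p48 puv)
        · exact hP410F (Pt 4 9 10 na4 na9 na10 (by decide) (by decide) (by decide) p49 puv)
    · -- p48 and p410 : every pair in the complement of A is dependent; contradiction
      have p49 : ¬ (contract M' A).Indep {4, 9} :=
        Pt 4 8 9 na4 na8 na9 (by decide) (by decide) (by decide) p48 p89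
      have hto4 : ∀ u : Fin 11, u ∉ A → u ≠ 4 → ¬ (contract M' A).Indep {4, u} := by
        intro u hu hne
        rcases hScases u hu with rfl | rfl | rfl | rfl | rfl | rfl | rfl
        · exact absurd rfl hne
        · exact p45
        · exact p46
        · exact p47
        · exact p48
        · exact p49
        · exact p410
      have hallP : ∀ u, u ∉ A → ∀ v, v ∉ A → u ≠ v → ¬ (contract M' A).Indep {u, v} := by
        intro u hu v hv hne
        refine centerPairs 4 na4 (fun w => w ∉ A) (fun w hw => hw) ?_ u hu v hv hne
        intro w hw hw4
        exact hto4 w hw hw4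
      obtain ⟨B, hB, h0B⟩ := (hnl 0).exists_isBase_superset
      have h0inB : (0 : Fin 11) ∈ B := h0B rfl
      have hBA : ∀ b ∈ B, b ∈ A → b = 0 := by
        intro b hb hbA
        by_contra hbne
        exact hpairsA 0 zero_memA b hbA (fun h => hbne h.symm)
          (hB.indep.subset (pair_subset h0inB hb))
      obtain ⟨p, q, r, hpq, hpr, hqr, hBeq⟩ := Set.ncard_eq_three.1 (hB3 B hB)
      have h0mem : (0 : Fin 11) ∈ ({p, q, r} : Set (Fin 11)) := hBeq ▸ h0inB
      have hBind : M'.Indep {p, q, r} := hBeq ▸ hB.indep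
      have hxy : ∀ x y : Fin 11, x ≠ y → x ∈ B → y ∈ B → x ∉ A → y ∉ A →
          M'.Indep {0, x, y} → False := by
        intro x y hne hxB hyB hx hy hind
        exact hallP x hx y hy hne ((hN2 x y hx hy).2 hind)
      rcases mem_insert_iff.1 h0mem with h0 | h0
      · subst h0
        refine hxy q r hqr (hBeq ▸ (by simp) : q ∈ B) (hBeq ▸ (by simp) : r ∈ B) ?_ ?_ hBind
        · intro hqA; exact hpq (hBA q (hBeq ▸ (by simp)) hqA).symm
        · intro hrA; exact hpr (hBA r (hBeq ▸ (by simp)) hrA).symm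
      · rcases mem_insert_iff.1 h0 with h0 | h0
        · subst h0
          have hBind' : M'.Indep {0, p, r} := by
            rwa [show ({p, 0, r} : Set (Fin 11)) = {0, p, r} from by ext z; simp; tauto]
              at hBind
          refine hxy p r hpr (hBeq ▸ (by simp) : p ∈ B) (hBeq ▸ (by simp) : r ∈ B) ?_ ?_ hBind'
          · intro hpA; exact hpq (hBA p (hBeq ▸ (by simp)) hpA)
          · intro hrA; exact hqr (hBA r (hBeq ▸ (by simp)) hrA).symm
        · rcases mem_singleton_iff.1 h0 with h0
          subst h0
          have hBind' : M'.Indep {0, p, q} := by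
            rwa [show ({p, q, 0} : Set (Fin 11)) = {0, p, q} from by ext z; simp; tauto]
              at hBind
          refine hxy p q hpq (hBeq ▸ (by simp) : p ∈ B) (hBeq ▸ (by simp) : q ∈ B) ?_ ?_ hBind'
          · intro hpA; exact hpr (hBA p (hBeq ▸ (by simp)) hpA)
          · intro hqA; exact hqr (hBA q (hBeq ▸ (by simp)) hqA)

end PaperWMO
end
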